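/- arXiv:1707.05221 — 5 statements merged into one kernel-verified Lean document; each statement's English description precedes it below -/
import Mathlib

section
/- Let d ≥ 1, α ∈ (1, 2) and ε ∈ (0, 1/2), and let D_ε = {y ∈ ℝ^d : |y| ≤ 1−ε}. There exists a constant κ > 0 (depending only on d, α, ε) such that for every x ∈ D_ε and every t with 0 < t < ε^α, ∫_{D_ε} min( t^{−d/α}, t/|x−y|^{α+d} ) dy ≥ κ. -/
open MeasureTheory

/-- Lower bound for the integral over `D_ε` of the α-stable kernel profile:
there is `κ > 0` such that for every `x ∈ D_ε` and `0 < t < ε^α`,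
`∫_{D_ε} min(t^(-d/α), t/|x-y|^(α+d)) dy ≥ κ`. -/
theorem stable_kernel_integral_lower (d : ℕ) (hd : 1 ≤ d) (α ε : ℝ)
    (hα : α ∈ Set.Ioo (1 : ℝ) 2) (hε : ε ∈ Set.Ioo 0 (1 / 2 : ℝ)) :
    ∃ κ : ℝ, 0 < κ ∧
      ∀ x ∈ Metric.closedBall (0 : EuclideanSpace ℝ (Fin d)) (1 - ε),
        ∀ t : ℝ, 0 < t → t < ε ^ α →
          κ ≤ ∫ y in Metric.closedBall (0 : EuclideanSpace ℝ (Fin d)) (1 - ε),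
                min (t ^ (-(d : ℝ) / α)) (t / ‖x - y‖ ^ (α + (d : ℝ))) := by
  classical
  obtain ⟨hα1, hα2⟩ := hα
  obtain ⟨hε0, hε12⟩ := hε
  have hαpos : (0:ℝ) < α := by linarith
  haveI : Nonempty (Fin d) := ⟨⟨0, hd⟩⟩
  set V : ℝ := (volume (Metric.closedBall (0 : EuclideanSpace ℝ (Fin d)) 1)).toReal with hV
  have hVtop : volume (Metric.closedBall (0 : EuclideanSpace ℝ (Fin d)) 1) ≠ ⊤ :=
    measure_closedBall_lt_top.ne
  have hVpos : 0 < V :=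
    ENNReal.toReal_pos (Metric.measure_closedBall_pos volume _ one_pos).ne' hVtop
  refine ⟨V / 2 ^ d, by positivity, ?_⟩
  intro x hx t ht htε
  have hxnorm : ‖x‖ ≤ 1 - ε := by simpa using hx
  set ρ : ℝ := t ^ (α⁻¹) with hρdef
  have hρpos : 0 < ρ := Real.rpow_pos_of_pos ht _
  have hρε : ρ < ε := by
    have h := Real.rpow_lt_rpow ht.le htε (inv_pos.mpr hαpos)
    rwa [Real.rpow_rpow_inv hε0.le hαpos.ne'] at h
  -- choose a center z
  obtain ⟨z, hz1, hz2⟩ : ∃ z : EuclideanSpace ℝ (Fin d),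
      ‖x - z‖ ≤ ρ / 2 ∧ ‖z‖ + ρ / 2 ≤ 1 - ε := by
    rcases le_or_gt (ρ / 2) ‖x‖ with h | h
    · have hxpos : 0 < ‖x‖ := lt_of_lt_of_le (by positivity) h
      refine ⟨(1 - ρ / (2 * ‖x‖)) • x, ?_, ?_⟩
      · have hxz : x - (1 - ρ / (2 * ‖x‖)) • x = (ρ / (2 * ‖x‖)) • x := by
          rw [sub_smul, one_smul]; abel
        rw [hxz, norm_smul, Real.norm_of_nonneg (by positivity)]
        have heq : ρ / (2 * ‖x‖) * ‖x‖ = ρ / 2 := by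
          field_simp
        rw [heq]
      · have hfac : 0 ≤ 1 - ρ / (2 * ‖x‖) := by
          rw [sub_nonneg, div_le_one (by positivity)]
          linarith
        rw [norm_smul, Real.norm_of_nonneg hfac]
        have : (1 - ρ / (2 * ‖x‖)) * ‖x‖ = ‖x‖ - ρ / 2 := by
          field_simp
        rw [this]; linarith
    · exact ⟨0, by simpa using h.le, by rw [norm_zero, zero_add]; linarith⟩
  set S : Set (EuclideanSpace ℝ (Fin d)) := Metric.closedBall z (ρ / 2) with hSdef
  set D : Set (EuclideanSpace ℝ (Fin d)) := Metric.closedBall (0 : EuclideanSpace ℝ (Fin d)) (1 - ε) with hDdef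
  have hSD : S ⊆ D := by
    intro y hy
    rw [hSdef, Metric.mem_closedBall, dist_eq_norm] at hy
    rw [hDdef, Metric.mem_closedBall, dist_eq_norm, sub_zero]
    calc ‖y‖ = ‖(y - z) + z‖ := by rw [sub_add_cancel]
    _ ≤ ‖y - z‖ + ‖z‖ := norm_add_le _ _
    _ ≤ ρ / 2 + ‖z‖ := by linarith
    _ ≤ 1 - ε := by linarith
  have hSx : ∀ y ∈ S, ‖x - y‖ ≤ ρ := by
    intro y hy
    rw [hSdef, Metric.mem_closedBall, dist_eq_norm] at hy
    calc ‖x - y‖ = ‖(x - z) + (z - y)‖ := by rw [sub_add_sub_cancel]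
    _ ≤ ‖x - z‖ + ‖z - y‖ := norm_add_le _ _
    _ ≤ ρ / 2 + ρ / 2 := add_le_add hz1 (by rwa [norm_sub_rev])
    _ = ρ := by ring
  set c : ℝ := t ^ (-(d : ℝ) / α) with hcdef
  have hcpos : 0 < c := Real.rpow_pos_of_pos ht _
  set f : EuclideanSpace ℝ (Fin d) → ℝ :=
    fun y => min (t ^ (-(d : ℝ) / α)) (t / ‖x - y‖ ^ (α + (d : ℝ))) with hfdef
  have hf_nonneg : ∀ y, 0 ≤ f y := fun y =>
    le_min hcpos.le (div_nonneg ht.le (Real.rpow_nonneg (norm_nonneg _) _))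
  have hf_meas : Measurable f := by
    apply Measurable.min measurable_const
    exact Measurable.div measurable_const
      ((measurable_const.sub measurable_id).norm.pow measurable_const)
  have hDtop : volume D ≠ ⊤ := measure_closedBall_lt_top.ne
  have hInt : IntegrableOn f D volume := by
    apply Measure.integrableOn_of_bounded hDtop hf_meas.aestronglyMeasurable (M := c)
    filter_upwards with y
    rw [Real.norm_of_nonneg (hf_nonneg y)]
    exact min_le_left _ _
  set S' : Set (EuclideanSpace ℝ (Fin d)) := S \ {x} with hS'def
  have hS'meas : MeasurableSet S' :=
    measurableSet_closedBall.diff (measurableSet_singleton x)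
  have hμS' : volume S' = volume S := measure_diff_null (measure_singleton x)
  have hS'top : volume S' ≠ ⊤ := by
    rw [hμS']; exact measure_closedBall_lt_top.ne
  -- pointwise bound on S'
  have hpt : ∀ y ∈ S', c ≤ f y := by
    intro y hy
    obtain ⟨hyS, hyx⟩ := hy
    have hyx' : y ≠ x := fun h => hyx (by simp [h])
    have hxyne : x - y ≠ 0 := sub_ne_zero.mpr (Ne.symm hyx')
    have hxypos : 0 < ‖x - y‖ := norm_pos_iff.mpr hxyne
    have hle : ‖x - y‖ ≤ ρ := hSx y hyS
    have hql : ‖x - y‖ ^ (α + (d:ℝ)) ≤ t ^ (α⁻¹ * (α + (d:ℝ))) := by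
      calc ‖x - y‖ ^ (α + (d:ℝ)) ≤ ρ ^ (α + (d:ℝ)) :=
        Real.rpow_le_rpow (norm_nonneg _) hle (by positivity)
      _ = t ^ (α⁻¹ * (α + (d:ℝ))) := by rw [hρdef, ← Real.rpow_mul ht.le]
    have hden : 0 < ‖x - y‖ ^ (α + (d:ℝ)) := Real.rpow_pos_of_pos hxypos _
    have h3 : c = t / t ^ (α⁻¹ * (α + (d:ℝ))) := by
      rw [hcdef, eq_div_iff (Real.rpow_pos_of_pos ht _).ne', ← Real.rpow_add ht,
        show -(d:ℝ)/α + α⁻¹ * (α + (d:ℝ)) = 1 by field_simp; ring, Real.rpow_one]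
    have hb : c ≤ t / ‖x - y‖ ^ (α + (d:ℝ)) := by
      rw [h3]
      gcongr
    exact le_min le_rfl hb
  have hIntS' : IntegrableOn f S' volume :=
    hInt.mono_set (fun y hy => hSD hy.1)
  have hstep1 : c * (volume S').toReal ≤ ∫ y in S', f y :=
    setIntegral_ge_of_const_le_real hS'meas hS'top hpt hIntS'
  have hstep2 : (∫ y in S', f y) ≤ ∫ y in D, f y := by
    apply setIntegral_mono_set hInt
    · filter_upwards with y using hf_nonneg y
    · exact HasSubset.Subset.eventuallyLE (fun y hy => hSD hy.1)
  -- compute the measure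
  have hμS : (volume S).toReal = (ρ / 2) ^ d * V := by
    rw [hSdef, Measure.addHaar_closedBall' volume z (by positivity : (0:ℝ) ≤ ρ / 2),
      ENNReal.toReal_mul, ENNReal.toReal_ofReal (by positivity)]
    congr 2
    simp [finrank_euclideanSpace]
  have key : c * (volume S').toReal = V / 2 ^ d := by
    rw [hμS', hμS]
    have h1 : ρ ^ d = t ^ (α⁻¹ * d) := by
      rw [hρdef, ← Real.rpow_natCast (t ^ α⁻¹) d, ← Real.rpow_mul ht.le]
    have h2 : c * t ^ (α⁻¹ * (d:ℝ)) = 1 := by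
      rw [hcdef, ← Real.rpow_add ht,
        show -(d:ℝ)/α + α⁻¹ * d = 0 by field_simp; ring,
        Real.rpow_zero]
    calc c * ((ρ / 2) ^ d * V) = (c * t ^ (α⁻¹ * (d:ℝ))) * (V / 2 ^ d) := by
          rw [div_pow, h1]; ring
    _ = V / 2 ^ d := by rw [h2, one_mul]
  calc V / 2 ^ d = c * (volume S').toReal := key.symm
  _ ≤ ∫ y in S', f y := hstep1
  _ ≤ ∫ y in D, f y := hstep2
end

section
/- Let d ≥ 1, 0 < β < d and ε ∈ (0, 1/2), and let D_ε = {y ∈ ℝ^d : |y| ≤ 1−ε}. There exists a constant κ > 0 (depending only on d, β, ε) such that for every r with 0 < r ≤ 1−ε and all x, w ∈ D_ε with |x−w| ≤ r, ∫_{D_ε} ∫_{D_ε} 1_{\{|x−y| ≤ r\}} 1_{\{|w−z| ≤ r\}} |y−z|^{−β} dy dz ≥ κ r^{2d−β}. -/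
open MeasureTheory Metric Set

lemma riesz_integrableOn {d : ℕ} (hd : 1 ≤ d) {β : ℝ} (hβ : 0 < β) (hβd : β < d)
    (y : EuclideanSpace ℝ (Fin d)) {R : ℝ} (hR : 0 < R) :
    IntegrableOn (fun z : EuclideanSpace ℝ (Fin d) => ‖y - z‖ ^ (-β))
      (closedBall y R) := by
  haveI : Nonempty (Fin d) := ⟨⟨0, hd⟩⟩
  haveI : Nontrivial (EuclideanSpace ℝ (Fin d)) := inferInstance
  have hmeas : Measurable (fun z : EuclideanSpace ℝ (Fin d) => ‖y - z‖ ^ (-β)) := by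
    fun_prop
  refine ⟨hmeas.aestronglyMeasurable, ?_⟩
  rw [hasFiniteIntegral_iff_ofReal
    (Filter.Eventually.of_forall fun z => Real.rpow_nonneg (norm_nonneg _) _)]
  set A : ℕ → Set (EuclideanSpace ℝ (Fin d)) := fun n =>
    closedBall y (R * (1/2) ^ n) \ closedBall y (R * (1/2) ^ (n + 1)) with hA
  have hsing : volume ({y} : Set (EuclideanSpace ℝ (Fin d))) = 0 := measure_singleton y
  have hcover : closedBall y R \ {y} ⊆ ⋃ n, A n := by
    intro z hz
    obtain ⟨hzR, hzy⟩ := hz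
    have hpos : 0 < dist z y := by simpa [dist_pos] using hzy
    have hex : ∃ n : ℕ, R * (1/2) ^ (n + 1) < dist z y := by
      obtain ⟨n, hn⟩ := exists_pow_lt_of_lt_one (div_pos hpos hR)
        (show (1/2 : ℝ) < 1 by norm_num)
      refine ⟨n, ?_⟩
      have h1 : (1/2 : ℝ) ^ (n+1) ≤ (1/2) ^ n :=
        pow_le_pow_of_le_one (by norm_num) (by norm_num) (by omega)
      have h2 : R * (1/2) ^ n < dist z y := by
        rw [lt_div_iff₀ hR] at hn; linarith [hn]
      nlinarith [pow_pos (show (0:ℝ) < 1/2 by norm_num) (n+1)]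
    classical
    set n := Nat.find hex with hn
    refine mem_iUnion.2 ⟨n, ?_, ?_⟩
    · rw [mem_closedBall] at hzR ⊢
      rcases Nat.eq_zero_or_pos n with h0 | h0
      · rw [h0]; simpa using hzR
      · have hmin := Nat.find_min hex (show n - 1 < n by omega)
        push_neg at hmin
        have : n - 1 + 1 = n := by omega
        rw [this] at hmin
        exact hmin
    · rw [mem_closedBall, not_le]
      exact Nat.find_spec hex
  have hterm : ∀ n : ℕ, ∫⁻ z in A n, ENNReal.ofReal (‖y - z‖ ^ (-β))
      ≤ ENNReal.ofReal (((R/2) ^ (-β) * R ^ d) * ((1/2 : ℝ) ^ ((d:ℝ) - β)) ^ n)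
        * volume (ball (0 : EuclideanSpace ℝ (Fin d)) 1) := by
    intro n
    have hr2 : (0:ℝ) < R * (1/2) ^ (n+1) := by positivity
    have hb : ∀ z ∈ A n, ENNReal.ofReal (‖y - z‖ ^ (-β))
        ≤ ENNReal.ofReal ((R * (1/2) ^ (n+1)) ^ (-β)) := by
      intro z hz
      apply ENNReal.ofReal_le_ofReal
      have h1 : R * (1/2) ^ (n+1) ≤ ‖y - z‖ := by
        have h := hz.2
        rw [mem_closedBall, not_le] at h
        rw [show ‖y - z‖ = dist z y by rw [dist_comm, dist_eq_norm]]
        exact h.le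
      exact Real.rpow_le_rpow_of_nonpos hr2 h1 (neg_nonpos.2 hβ.le)
    calc ∫⁻ z in A n, ENNReal.ofReal (‖y - z‖ ^ (-β))
        ≤ ∫⁻ _ in A n, ENNReal.ofReal ((R * (1/2) ^ (n+1)) ^ (-β)) := by
          exact setLIntegral_mono measurable_const hb
      _ = ENNReal.ofReal ((R * (1/2) ^ (n+1)) ^ (-β)) * volume (A n) := by
          rw [setLIntegral_const]
      _ ≤ ENNReal.ofReal ((R * (1/2) ^ (n+1)) ^ (-β))
            * (ENNReal.ofReal ((R * (1/2) ^ n) ^ d)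
              * volume (ball (0 : EuclideanSpace ℝ (Fin d)) 1)) := by
          gcongr
          calc volume (A n) ≤ volume (closedBall y (R * (1/2) ^ n)) :=
                measure_mono diff_subset
            _ = _ := by
                rw [Measure.addHaar_closedBall _ _ (by positivity)]
                simp [finrank_euclideanSpace_fin]
      _ = _ := by
          rw [← mul_assoc, ← ENNReal.ofReal_mul (by positivity)]
          congr 2
          have h2n : (0:ℝ) < (1/2:ℝ) ^ n := by positivity
          have e1 : R * (1/2:ℝ) ^ (n+1) = (R/2) * (1/2) ^ n := by ring
          rw [e1, Real.mul_rpow (by positivity) h2n.le, mul_pow]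
          have e2 : ((1/2:ℝ) ^ n) ^ (-β) * ((1/2:ℝ) ^ n) ^ d
              = ((1/2:ℝ) ^ ((d:ℝ) - β)) ^ n := by
            rw [← Real.rpow_natCast ((1/2:ℝ) ^ n) d,
              ← Real.rpow_natCast (1/2:ℝ) n,
              ← Real.rpow_mul (by norm_num : (0:ℝ) ≤ 1/2),
              ← Real.rpow_mul (by norm_num : (0:ℝ) ≤ 1/2),
              ← Real.rpow_add (by norm_num : (0:ℝ) < 1/2),
              ← Real.rpow_natCast ((1/2:ℝ) ^ ((d:ℝ) - β)) n,
              ← Real.rpow_mul (by norm_num : (0:ℝ) ≤ 1/2)]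
            congr 1
            ring
          linear_combination ((R/2:ℝ) ^ (-β) * (R:ℝ) ^ d) * e2
  calc ∫⁻ z in closedBall y R, ENNReal.ofReal (‖y - z‖ ^ (-β))
      = ∫⁻ z in closedBall y R \ {y}, ENNReal.ofReal (‖y - z‖ ^ (-β)) := by
        exact (setLIntegral_congr (diff_null_ae_eq_self hsing).symm)
    _ ≤ ∫⁻ z in ⋃ n, A n, ENNReal.ofReal (‖y - z‖ ^ (-β)) :=
        lintegral_mono_set hcover
    _ ≤ ∑' n, ∫⁻ z in A n, ENNReal.ofReal (‖y - z‖ ^ (-β)) :=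
        lintegral_iUnion_le _ _
    _ ≤ ∑' n, ENNReal.ofReal (((R/2) ^ (-β) * R ^ d) * ((1/2 : ℝ) ^ ((d:ℝ) - β)) ^ n)
          * volume (ball (0 : EuclideanSpace ℝ (Fin d)) 1) :=
        ENNReal.tsum_le_tsum hterm
    _ < ⊤ := by
        have hq0 : (0:ℝ) ≤ (1/2 : ℝ) ^ ((d:ℝ) - β) := Real.rpow_nonneg (by norm_num) _
        have hq1 : (1/2 : ℝ) ^ ((d:ℝ) - β) < 1 := by
          apply Real.rpow_lt_one (by norm_num) (by norm_num)
          linarith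
        have : ∀ n : ℕ, ENNReal.ofReal (((R/2) ^ (-β) * R ^ d) * ((1/2 : ℝ) ^ ((d:ℝ) - β)) ^ n)
            = ENNReal.ofReal ((R/2) ^ (-β) * R ^ d)
              * ENNReal.ofReal ((1/2 : ℝ) ^ ((d:ℝ) - β)) ^ n := by
          intro n
          rw [ENNReal.ofReal_mul (by positivity), ENNReal.ofReal_pow hq0]
        simp_rw [this]
        rw [ENNReal.tsum_mul_right, ENNReal.tsum_mul_left, ENNReal.tsum_geometric]
        have h1 : (1 - ENNReal.ofReal ((1/2 : ℝ) ^ ((d:ℝ) - β)))⁻¹ ≠ ⊤ := by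
          rw [Ne, ENNReal.inv_eq_top, tsub_eq_zero_iff_le, not_le]
          exact lt_of_lt_of_le (ENNReal.ofReal_lt_one.2 hq1) le_rfl
        exact ENNReal.mul_lt_top (ENNReal.mul_lt_top ENNReal.ofReal_lt_top
          (lt_top_iff_ne_top.2 h1)) measure_ball_lt_top

open MeasureTheory

/-- Riesz-kernel double integral lower bound: there is `κ > 0` such that for
every `0 < r ≤ 1-ε` and `x, w ∈ D_ε` with `|x-w| ≤ r`,
`∫_{D_ε}∫_{D_ε} 1_{|x-y|≤r} 1_{|w-z|≤r} |y-z|^(-β) dy dz ≥ κ r^(2d-β)`. -/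
theorem riesz_double_integral_lower (d : ℕ) (hd : 1 ≤ d) (β ε : ℝ)
    (hβ : 0 < β) (hβd : β < d) (hε : ε ∈ Set.Ioo 0 (1 / 2 : ℝ)) :
    ∃ κ : ℝ, 0 < κ ∧
      ∀ r : ℝ, 0 < r → r ≤ 1 - ε →
        ∀ x ∈ Metric.closedBall (0 : EuclideanSpace ℝ (Fin d)) (1 - ε),
          ∀ w ∈ Metric.closedBall (0 : EuclideanSpace ℝ (Fin d)) (1 - ε),
            dist x w ≤ r →
              κ * r ^ (2 * (d : ℝ) - β) ≤
                ∫ y in Metric.closedBall (0 : EuclideanSpace ℝ (Fin d)) (1 - ε),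
                  ∫ z in Metric.closedBall (0 : EuclideanSpace ℝ (Fin d)) (1 - ε),
                    (Metric.closedBall x r).indicator 1 y *
                      (Metric.closedBall w r).indicator 1 z * ‖y - z‖ ^ (-β) := by
  haveI : Nonempty (Fin d) := ⟨⟨0, hd⟩⟩
  haveI : Nontrivial (EuclideanSpace ℝ (Fin d)) := inferInstance
  obtain ⟨hε0, hε2⟩ := hε
  have h1ε : 0 < 1 - ε := by linarith
  set E := EuclideanSpace ℝ (Fin d) with hE
  set ω := (volume (Metric.ball (0 : E) 1)).toReal with hω
  have hωpos : 0 < ω :=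
    ENNReal.toReal_pos (Metric.measure_ball_pos volume _ one_pos).ne' measure_ball_lt_top.ne
  refine ⟨(3:ℝ)^(-β) * (ω / 2^d)^2, by positivity, ?_⟩
  intro r hr hrε x hx w hw hxw
  set B := Metric.closedBall (0 : E) (1 - ε) with hB
  -- inner balls
  have key : ∀ v ∈ B, (Metric.closedBall ((1 - r/(2*(1-ε))) • v) (r/2) ⊆ B) ∧
      (Metric.closedBall ((1 - r/(2*(1-ε))) • v) (r/2) ⊆ Metric.closedBall v r) := by
    intro v hv
    set s := r/(2*(1-ε)) with hs
    have hs0 : 0 < s := by positivity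
    have hs1 : s ≤ 1/2 := by
      rw [hs, div_le_iff₀ (by linarith)]; linarith
    have hsε : s * (1-ε) = r/2 := by rw [hs]; field_simp
    have hvn : ‖v‖ ≤ 1 - ε := by simpa [hB, Metric.mem_closedBall, dist_zero_right] using hv
    have hnorm : ‖(1 - s) • v‖ = (1 - s) * ‖v‖ := by
      rw [norm_smul, Real.norm_eq_abs, abs_of_nonneg (by linarith)]
    have hdiff : ‖(1 - s) • v - v‖ = s * ‖v‖ := by
      have : (1 - s) • v - v = (-s) • v := by
        rw [show v = (1:ℝ) • v by rw [one_smul], smul_smul, ← sub_smul]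
        norm_num
      rw [this, norm_smul, Real.norm_eq_abs, abs_of_nonpos (by linarith), neg_neg]
    constructor <;> intro u hu <;> rw [Metric.mem_closedBall] at hu ⊢
    · rw [dist_zero_right]
      calc ‖u‖ ≤ ‖u - (1-s) • v‖ + ‖(1-s) • v‖ := by
            simpa using norm_add_le (u - (1-s) • v) ((1-s) • v)
        _ ≤ r/2 + (1-s) * ‖v‖ := by
            rw [← hnorm]; gcongr; rw [dist_eq_norm] at hu; exact hu
        _ ≤ r/2 + (1-s) * (1-ε) := by gcongr; linarith
        _ = 1 - ε := by nlinarith [hsε]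
    · calc dist u v ≤ dist u ((1-s) • v) + dist ((1-s) • v) v := dist_triangle _ _ _
        _ ≤ r/2 + s * ‖v‖ := by
            rw [dist_eq_norm ((1-s) • v) v, hdiff]; gcongr
        _ ≤ r/2 + s * (1-ε) := by gcongr
        _ = r := by rw [hsε]; ring
  set px : E := (1 - r/(2*(1-ε))) • x with hpx
  set pw : E := (1 - r/(2*(1-ε))) • w with hpw
  set Sx := Metric.closedBall px (r/2) with hSx
  set Sw := Metric.closedBall pw (r/2) with hSw
  have hvol : ∀ p : E, (volume (Metric.closedBall p (r/2))).toReal = (r/2)^d * ω := by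
    intro p
    have hfr : Module.finrank ℝ E = d := finrank_euclideanSpace_fin
    rw [Measure.addHaar_closedBall _ _ (by positivity : (0:ℝ) ≤ r/2), hfr,
      ENNReal.toReal_mul, ENNReal.toReal_ofReal (by positivity)]
  set c := (3*r) ^ (-β) with hc
  set m := (r/2)^d * ω with hm
  have hcpos : 0 < c := Real.rpow_pos_of_pos (by linarith) _
  have hmpos : 0 < m := by positivity
  -- integrand and its properties
  have hg_nonneg : ∀ y z : E, 0 ≤ (Metric.closedBall x r).indicator 1 y *
      (Metric.closedBall w r).indicator 1 z * ‖y - z‖ ^ (-β) := by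
    intro y z
    have h1 : (0:ℝ) ≤ (Metric.closedBall x r).indicator 1 y := by
      by_cases h : y ∈ Metric.closedBall x r <;> simp [h]
    have h2 : (0:ℝ) ≤ (Metric.closedBall w r).indicator 1 z := by
      by_cases h : z ∈ Metric.closedBall w r <;> simp [h]
    have h3 : (0:ℝ) ≤ ‖y - z‖ ^ (-β) := Real.rpow_nonneg (norm_nonneg _) _
    positivity
  have hg_le_one : ∀ (S : Set E) (t : E), S.indicator (1 : E → ℝ) t ≤ 1 := by
    intro S t; by_cases h : t ∈ S <;> simp [h]
  have hg_nonneg' : ∀ (S : Set E) (t : E), 0 ≤ S.indicator (1 : E → ℝ) t := by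
    intro S t; by_cases h : t ∈ S <;> simp [h]
  have hBsub : ∀ y ∈ B, B ⊆ Metric.closedBall y 2 := by
    intro y hy z hz
    rw [Metric.mem_closedBall]
    rw [hB, Metric.mem_closedBall, dist_zero_right] at hy hz
    calc dist z y ≤ ‖z‖ + ‖y‖ := by
          rw [dist_eq_norm]; simpa using norm_sub_le z y
      _ ≤ 2 := by linarith
  have hker_int : ∀ y : E, IntegrableOn (fun z : E => ‖y - z‖ ^ (-β))
      (Metric.closedBall y 2) := fun y => riesz_integrableOn hd hβ hβd y two_pos
  have hg_int : ∀ y ∈ B, IntegrableOn (fun z =>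
      (Metric.closedBall x r).indicator 1 y *
        (Metric.closedBall w r).indicator 1 z * ‖y - z‖ ^ (-β)) B := by
    intro y hy
    refine Integrable.mono' ((hker_int y).mono_set (hBsub y hy)) ?_ ?_
    · apply Measurable.aestronglyMeasurable
      exact ((measurable_const.mul
        (measurable_one.indicator measurableSet_closedBall)).mul (by fun_prop))
    · refine Filter.Eventually.of_forall fun z => ?_
      rw [Real.norm_eq_abs, abs_of_nonneg (hg_nonneg y z)]
      have h3 : (0:ℝ) ≤ ‖y - z‖ ^ (-β) := Real.rpow_nonneg (norm_nonneg _) _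
      calc (Metric.closedBall x r).indicator 1 y *
          (Metric.closedBall w r).indicator 1 z * ‖y - z‖ ^ (-β)
          ≤ 1 * 1 * ‖y - z‖ ^ (-β) :=
            mul_le_mul (mul_le_mul (hg_le_one _ _) (hg_le_one _ _)
              (hg_nonneg' _ _) zero_le_one) le_rfl h3 (by norm_num)
        _ = ‖y - z‖ ^ (-β) := by ring
  -- Step A: pointwise-in-y lower bound on the inner integral
  have claim1 : ∀ y : E, Sx.indicator (fun _ => c * m) y ≤
      ∫ z in B, (Metric.closedBall x r).indicator 1 y *
        (Metric.closedBall w r).indicator 1 z * ‖y - z‖ ^ (-β) := by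
    intro y
    by_cases hy : y ∈ Sx
    · rw [Set.indicator_of_mem hy]
      have hyB : y ∈ B := (key x hx).1 hy
      have hyx : y ∈ Metric.closedBall x r := (key x hx).2 hy
      have hint_h : IntegrableOn (Sw.indicator fun _ => c) B :=
        (integrableOn_const measure_closedBall_lt_top.ne).indicator
          measurableSet_closedBall
      have hne : ∀ᵐ z : E ∂volume, z ≠ y := by
        rw [ae_iff]
        have : {z : E | ¬ z ≠ y} = {y} := by ext z; simp
        rw [this]
        exact measure_singleton y
      have hle : ∀ᵐ z ∂(volume.restrict B), Sw.indicator (fun _ => c) z ≤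
          (Metric.closedBall x r).indicator 1 y *
            (Metric.closedBall w r).indicator 1 z * ‖y - z‖ ^ (-β) := by
        filter_upwards [ae_restrict_of_ae hne] with z hz
        by_cases hzw : z ∈ Sw
        · rw [Set.indicator_of_mem hzw]
          have hzwball : z ∈ Metric.closedBall w r := (key w hw).2 hzw
          rw [Set.indicator_of_mem hyx, Set.indicator_of_mem hzwball]
          simp only [Pi.one_apply, one_mul]
          have hyz : 0 < ‖y - z‖ := by
            rw [norm_pos_iff, sub_ne_zero]
            exact fun h => hz h.symm
          have h3r : ‖y - z‖ ≤ 3 * r := by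
            calc ‖y - z‖ = dist y z := by rw [dist_eq_norm]
              _ ≤ dist y x + dist x w + dist w z := dist_triangle4 y x w z
              _ ≤ r + r + r := by
                  gcongr
                  · exact Metric.mem_closedBall.1 hyx
                  · exact Metric.mem_closedBall'.1 hzwball
              _ = 3 * r := by ring
          exact Real.rpow_le_rpow_of_nonpos hyz h3r (neg_nonpos.2 hβ.le)
        · rw [Set.indicator_of_notMem hzw]
          exact hg_nonneg y z
      have hmono := integral_mono_ae hint_h (hg_int y hyB) hle
      calc c * m = ∫ z in B, Sw.indicator (fun _ => c) z := by
            rw [setIntegral_indicator measurableSet_closedBall,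
              Set.inter_eq_self_of_subset_right (key w hw).1, setIntegral_const,
              smul_eq_mul, measureReal_def, hvol, mul_comm]
        _ ≤ _ := hmono
    · rw [Set.indicator_of_notMem hy]
      exact setIntegral_nonneg measurableSet_closedBall fun z _ => hg_nonneg y z
  -- Step B: integrate in y
  set C := ∫ u in Metric.closedBall (0:E) 2, ‖u‖ ^ (-β) with hC
  have htrans : ∀ y : E, ∫ z in Metric.closedBall y 2, ‖y - z‖ ^ (-β) = C := by
    intro y
    have hind : ∀ z : E, (Metric.closedBall y 2).indicator
        (fun z' => ‖y - z'‖ ^ (-β)) z =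
        (Metric.closedBall (0:E) 2).indicator (fun u => ‖u‖ ^ (-β)) (z - y) := by
      intro z
      have hmem : z ∈ Metric.closedBall y 2 ↔ z - y ∈ Metric.closedBall (0:E) 2 := by
        simp [Metric.mem_closedBall, dist_eq_norm]
      by_cases hz : z ∈ Metric.closedBall y 2
      · rw [Set.indicator_of_mem hz, Set.indicator_of_mem (hmem.1 hz)]
        rw [norm_sub_rev]
      · rw [Set.indicator_of_notMem hz, Set.indicator_of_notMem (fun h => hz (hmem.2 h))]
    rw [hC, ← integral_indicator measurableSet_closedBall,
      ← integral_indicator measurableSet_closedBall]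
    simp_rw [hind]
    exact integral_sub_right_eq_self
      (fun u => (Metric.closedBall (0:E) 2).indicator (fun u' => ‖u'‖ ^ (-β)) u) y
  have hCbound : ∀ y ∈ B, |∫ z in B, (Metric.closedBall x r).indicator 1 y *
      (Metric.closedBall w r).indicator 1 z * ‖y - z‖ ^ (-β)| ≤ C := by
    intro y hy
    have h1 : |∫ z in B, (Metric.closedBall x r).indicator 1 y *
        (Metric.closedBall w r).indicator 1 z * ‖y - z‖ ^ (-β)| ≤
        ∫ z in B, ‖y - z‖ ^ (-β) := by
      rw [abs_of_nonneg (setIntegral_nonneg measurableSet_closedBall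
        fun z _ => hg_nonneg y z)]
      refine setIntegral_mono_on (hg_int y hy)
        (((hker_int y).mono_set (hBsub y hy))) measurableSet_closedBall fun z _ => ?_
      have h3 : (0:ℝ) ≤ ‖y - z‖ ^ (-β) := Real.rpow_nonneg (norm_nonneg _) _
      calc (Metric.closedBall x r).indicator 1 y *
          (Metric.closedBall w r).indicator 1 z * ‖y - z‖ ^ (-β)
          ≤ 1 * 1 * ‖y - z‖ ^ (-β) :=
            mul_le_mul (mul_le_mul (hg_le_one _ _) (hg_le_one _ _)
              (hg_nonneg' _ _) zero_le_one) le_rfl h3 (by norm_num)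
        _ = ‖y - z‖ ^ (-β) := by ring
    have h2 : ∫ z in B, ‖y - z‖ ^ (-β) ≤ ∫ z in Metric.closedBall y 2, ‖y - z‖ ^ (-β) := by
      refine setIntegral_mono_set (hker_int y) ?_ (HasSubset.Subset.eventuallyLE (hBsub y hy))
      exact Filter.Eventually.of_forall fun z => Real.rpow_nonneg (norm_nonneg _) _
    calc _ ≤ _ := h1
      _ ≤ _ := h2
      _ = C := htrans y
  have hI_meas : AEStronglyMeasurable (fun y : E => ∫ z in B,
      (Metric.closedBall x r).indicator 1 y *
        (Metric.closedBall w r).indicator 1 z * ‖y - z‖ ^ (-β))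
      (volume.restrict B) := by
    have hjm : Measurable (fun p : E × E => (Metric.closedBall x r).indicator 1 p.1 *
        (Metric.closedBall w r).indicator 1 p.2 * ‖p.1 - p.2‖ ^ (-β)) := by
      refine (Measurable.mul (Measurable.mul ?_ ?_) (by fun_prop))
      · exact (measurable_one.indicator measurableSet_closedBall).comp measurable_fst
      · exact (measurable_one.indicator measurableSet_closedBall).comp measurable_snd
    exact (hjm.stronglyMeasurable.integral_prod_right').aestronglyMeasurable
  have hI_int : IntegrableOn (fun y : E => ∫ z in B,
      (Metric.closedBall x r).indicator 1 y *
        (Metric.closedBall w r).indicator 1 z * ‖y - z‖ ^ (-β)) B := by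
    refine Integrable.mono' (g := fun _ => C)
      (integrableOn_const measure_closedBall_lt_top.ne) hI_meas ?_
    filter_upwards [ae_restrict_mem measurableSet_closedBall] with y hy
    rw [Real.norm_eq_abs]
    exact hCbound y hy
  have hind_int : IntegrableOn (Sx.indicator fun _ => c * m) B :=
    (integrableOn_const measure_closedBall_lt_top.ne).indicator
      measurableSet_closedBall
  have hfinal := integral_mono_ae hind_int hI_int (Filter.Eventually.of_forall claim1)
  have hlhs : ∫ y in B, Sx.indicator (fun _ => c * m) y = m * (c * m) := by
    rw [setIntegral_indicator measurableSet_closedBall,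
      Set.inter_eq_self_of_subset_right (key x hx).1, setIntegral_const,
      smul_eq_mul, measureReal_def, hvol]
  rw [hlhs] at hfinal
  refine le_trans (le_of_eq ?_) hfinal
  -- final arithmetic
  rw [hc, hm]
  have e : r ^ (-β) * (r ^ d * r ^ d) = r ^ (2*(d:ℝ) - β) := by
    rw [← pow_add, ← Real.rpow_natCast r (d + d), ← Real.rpow_add hr]
    congr 1
    push_cast
    ring
  rw [Real.mul_rpow (by norm_num : (0:ℝ) ≤ 3) hr.le, div_pow, ← e]
  have h2d : ((2:ℝ)^d) ≠ 0 := by positivity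
  field_simp
  rw [← mul_pow, ← mul_pow]; congr 2; ring
end

section
/- Let d ≥ 1, 0 < β < d and c > 0. There exists a constant C > 0 (depending only on d, β, c) such that for every t > 0 and all x, w ∈ ℝ^d, ∫_{ℝ^d} ∫_{ℝ^d} t^{−d/2} exp(−c|x−y|²/t) · t^{−d/2} exp(−c|w−z|²/t) · |y−z|^{−β} dy dz ≤ C t^{−β/2}. -/
open MeasureTheory

open Metric Set Filter

lemma riesz_integrableOn_ball (d : ℕ) {β : ℝ} (hβ : 0 < β) (hβd : β < d) :
    IntegrableOn (fun v : EuclideanSpace ℝ (Fin d) => ‖v‖ ^ (-β)) (Metric.ball 0 1) volume := by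
  have hnn : ∀ v : EuclideanSpace ℝ (Fin d), 0 ≤ ‖v‖ ^ (-β) :=
    fun v => Real.rpow_nonneg (norm_nonneg _) _
  have hmeas : Measurable fun v : EuclideanSpace ℝ (Fin d) => ‖v‖ ^ (-β) :=
    by fun_prop
  refine ⟨hmeas.aestronglyMeasurable, ?_⟩
  rw [hasFiniteIntegral_iff_ofReal (Eventually.of_forall hnn)]
  rw [lintegral_eq_lintegral_meas_le _ (Eventually.of_forall hnn) hmeas.aemeasurable]
  set ν := (volume : Measure (EuclideanSpace ℝ (Fin d))).restrict (Metric.ball 0 1) with hν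
  have hb1 : ∀ t : ℝ, ν {a | t ≤ ‖a‖ ^ (-β)} ≤ volume (Metric.ball (0 : EuclideanSpace ℝ (Fin d)) 1) := by
    intro t
    calc ν {a | t ≤ ‖a‖ ^ (-β)} ≤ ν univ := measure_mono (subset_univ _)
    _ = volume (Metric.ball (0 : EuclideanSpace ℝ (Fin d)) 1) := by
        rw [hν, Measure.restrict_apply_univ]
  have hb2 : ∀ t : ℝ, 0 < t → ν {a | t ≤ ‖a‖ ^ (-β)} ≤
      ENNReal.ofReal (t ^ ((-β)⁻¹ * d)) * volume (Metric.ball (0 : EuclideanSpace ℝ (Fin d)) 1) := by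
    intro t ht
    have hsub : {a : EuclideanSpace ℝ (Fin d) | t ≤ ‖a‖ ^ (-β)} ⊆
        Metric.closedBall 0 (t ^ (-β)⁻¹) := by
      intro a ha
      simp only [mem_setOf_eq] at ha
      rcases eq_or_ne a 0 with rfl | h0
      · exfalso
        rw [norm_zero, Real.zero_rpow (neg_ne_zero.mpr hβ.ne')] at ha
        exact absurd (ht.trans_le ha) (lt_irrefl 0)
      · have hnorm : 0 < ‖a‖ := norm_pos_iff.mpr h0
        rw [mem_closedBall_zero_iff]
        exact (Real.le_rpow_inv_iff_of_neg hnorm ht (neg_lt_zero.mpr hβ)).mpr ha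
    calc ν {a | t ≤ ‖a‖ ^ (-β)} ≤ volume (Metric.closedBall (0 : EuclideanSpace ℝ (Fin d)) (t ^ (-β)⁻¹)) := by
          have hSm : MeasurableSet {a : EuclideanSpace ℝ (Fin d) | t ≤ ‖a‖ ^ (-β)} :=
            measurableSet_le measurable_const hmeas
          rw [hν, Measure.restrict_apply hSm]
          exact measure_mono (inter_subset_left.trans hsub)
    _ = ENNReal.ofReal (t ^ ((-β)⁻¹ * d)) * volume (Metric.ball (0 : EuclideanSpace ℝ (Fin d)) 1) := by
        rw [Measure.addHaar_closedBall _ _ (Real.rpow_nonneg ht.le _)]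
        congr 2
        rw [← Real.rpow_natCast (t ^ (-β)⁻¹) _, ← Real.rpow_mul ht.le,
          finrank_euclideanSpace_fin]
  have hp : ((-β)⁻¹ * d : ℝ) < -1 := by
    have h1 : ((-β)⁻¹ * d : ℝ) = -(d / β) := by
      rw [inv_neg, neg_mul, inv_mul_eq_div]
    rw [h1, neg_lt_neg_iff]
    exact (one_lt_div hβ).mpr hβd
  calc ∫⁻ t in Ioi (0:ℝ), ν {a | t ≤ ‖a‖ ^ (-β)}
      ≤ ∫⁻ t in Ioc (0:ℝ) 1 ∪ Ioi 1, ν {a | t ≤ ‖a‖ ^ (-β)} :=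
        lintegral_mono_set Ioi_subset_Ioc_union_Ioi
    _ ≤ (∫⁻ t in Ioc (0:ℝ) 1, ν {a | t ≤ ‖a‖ ^ (-β)}) +
          ∫⁻ t in Ioi (1:ℝ), ν {a | t ≤ ‖a‖ ^ (-β)} := lintegral_union_le _ _ _
    _ < ⊤ := by
        refine ENNReal.add_lt_top.2 ⟨?_, ?_⟩
        · calc (∫⁻ t in Ioc (0:ℝ) 1, ν {a | t ≤ ‖a‖ ^ (-β)})
              ≤ ∫⁻ _ in Ioc (0:ℝ) 1, volume (Metric.ball (0 : EuclideanSpace ℝ (Fin d)) 1) :=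
                setLIntegral_mono' measurableSet_Ioc (fun t _ => hb1 t)
            _ = volume (Metric.ball (0 : EuclideanSpace ℝ (Fin d)) 1) * volume (Ioc (0:ℝ) 1) :=
                setLIntegral_const _ _
            _ < ⊤ := by
                refine ENNReal.mul_lt_top measure_ball_lt_top ?_
                simp [Real.volume_Ioc]
        · calc (∫⁻ t in Ioi (1:ℝ), ν {a | t ≤ ‖a‖ ^ (-β)})
              ≤ ∫⁻ t in Ioi (1:ℝ), ENNReal.ofReal (t ^ ((-β)⁻¹ * d)) *
                  volume (Metric.ball (0 : EuclideanSpace ℝ (Fin d)) 1) :=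
                setLIntegral_mono' measurableSet_Ioi
                  (fun t ht => hb2 t (lt_trans one_pos ht))
            _ = (∫⁻ t in Ioi (1:ℝ), ENNReal.ofReal (t ^ ((-β)⁻¹ * d))) *
                  volume (Metric.ball (0 : EuclideanSpace ℝ (Fin d)) 1) :=
                lintegral_mul_const' _ _ measure_ball_lt_top.ne
            _ < ⊤ := ENNReal.mul_lt_top
                (integrableOn_Ioi_rpow_of_lt hp one_pos).setLIntegral_lt_top
                measure_ball_lt_top

lemma gauss_integrable (d : ℕ) {b : ℝ} (hb : 0 < b) :
    Integrable (fun v : EuclideanSpace ℝ (Fin d) => Real.exp (-b * ‖v‖ ^ 2)) := by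
  have h := (GaussianFourier.integrable_cexp_neg_mul_sq_norm_add
      (V := EuclideanSpace ℝ (Fin d)) (b := (b : ℂ)) (by simpa using hb) 0 0).norm
  refine h.congr (Eventually.of_forall fun v => ?_)
  simp only [Complex.norm_exp]
  norm_num
  exact Or.inl (by norm_cast)

lemma gauss_integral (d : ℕ) {b : ℝ} (hb : 0 < b) :
    (∫ v : EuclideanSpace ℝ (Fin d), Real.exp (-b * ‖v‖ ^ 2)) = (Real.pi / b) ^ ((d : ℝ) / 2) := by
  rw [GaussianFourier.integral_rexp_neg_mul_sq_norm hb, finrank_euclideanSpace_fin]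

lemma phi_bound (d : ℕ) {β c : ℝ} (hβ : 0 < β) (hβd : β < d) (hc : 0 < c)
    (a b : EuclideanSpace ℝ (Fin d)) :
    (∫ z : EuclideanSpace ℝ (Fin d), Real.exp (-c * ‖b - z‖ ^ 2) * ‖a - z‖ ^ (-β)) ≤
      (∫ v in Metric.ball (0 : EuclideanSpace ℝ (Fin d)) 1, ‖v‖ ^ (-β)) +
        (Real.pi / c) ^ ((d : ℝ) / 2) := by
  set F : EuclideanSpace ℝ (Fin d) → ℝ :=
    Set.indicator (Metric.ball 0 1) (fun v => ‖v‖ ^ (-β)) with hF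
  have hF_int : Integrable F :=
    (integrable_indicator_iff measurableSet_ball).mpr (riesz_integrableOn_ball d hβ hβd)
  have hFa : Integrable (fun z => F (a - z)) := hF_int.comp_sub_left a
  have hG : Integrable (fun z : EuclideanSpace ℝ (Fin d) => Real.exp (-c * ‖b - z‖ ^ 2)) :=
    (gauss_integrable d hc).comp_sub_left b
  have key : (∫ z : EuclideanSpace ℝ (Fin d), Real.exp (-c * ‖b - z‖ ^ 2) * ‖a - z‖ ^ (-β)) ≤
      ∫ z : EuclideanSpace ℝ (Fin d), (F (a - z) + Real.exp (-c * ‖b - z‖ ^ 2)) := by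
    refine integral_mono_of_nonneg (Eventually.of_forall fun z => ?_) (hFa.add hG)
      (Eventually.of_forall fun z => ?_)
    · exact mul_nonneg (Real.exp_nonneg _) (Real.rpow_nonneg (norm_nonneg _) _)
    · simp only
      by_cases hz : a - z ∈ Metric.ball (0 : EuclideanSpace ℝ (Fin d)) 1
      · have hFz : F (a - z) = ‖a - z‖ ^ (-β) := Set.indicator_of_mem hz _
        have hexp : Real.exp (-c * ‖b - z‖ ^ 2) ≤ 1 := by
          rw [Real.exp_le_one_iff]
          have : (0:ℝ) ≤ c * ‖b - z‖ ^ 2 := by positivity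
          linarith
        calc Real.exp (-c * ‖b - z‖ ^ 2) * ‖a - z‖ ^ (-β)
            ≤ 1 * ‖a - z‖ ^ (-β) := by gcongr
          _ = F (a - z) := by rw [one_mul, hFz]
          _ ≤ F (a - z) + Real.exp (-c * ‖b - z‖ ^ 2) :=
              le_add_of_nonneg_right (Real.exp_nonneg _)
      · have h1 : (1:ℝ) ≤ ‖a - z‖ := by
          rw [mem_ball_zero_iff, not_lt] at hz
          exact hz
        have hr1 : ‖a - z‖ ^ (-β) ≤ 1 :=
          Real.rpow_le_one_of_one_le_of_nonpos h1 (neg_nonpos.mpr hβ.le)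
        have hFz : (0:ℝ) ≤ F (a - z) :=
          Set.indicator_nonneg (fun v _ => Real.rpow_nonneg (norm_nonneg _) _) _
        calc Real.exp (-c * ‖b - z‖ ^ 2) * ‖a - z‖ ^ (-β)
            ≤ Real.exp (-c * ‖b - z‖ ^ 2) * 1 := by gcongr
          _ = Real.exp (-c * ‖b - z‖ ^ 2) := mul_one _
          _ ≤ F (a - z) + Real.exp (-c * ‖b - z‖ ^ 2) := le_add_of_nonneg_left hFz
  refine key.trans ?_
  rw [integral_add hFa hG]
  have h1 : (∫ z : EuclideanSpace ℝ (Fin d), F (a - z)) =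
      ∫ v in Metric.ball (0 : EuclideanSpace ℝ (Fin d)) 1, ‖v‖ ^ (-β) := by
    rw [integral_sub_left_eq_self F volume a, hF, integral_indicator measurableSet_ball]
  have h2 : (∫ z : EuclideanSpace ℝ (Fin d), Real.exp (-c * ‖b - z‖ ^ 2)) =
      (Real.pi / c) ^ ((d : ℝ) / 2) := by
    rw [integral_sub_left_eq_self (fun v : EuclideanSpace ℝ (Fin d) =>
      Real.exp (-c * ‖v‖ ^ 2)) volume b, gauss_integral d hc]
  rw [h1, h2]

lemma inner_bound (d : ℕ) {β c : ℝ} (hβ : 0 < β) (hβd : β < d) (hc : 0 < c)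
    {t : ℝ} (ht : 0 < t) (w y : EuclideanSpace ℝ (Fin d)) :
    (∫ z : EuclideanSpace ℝ (Fin d),
        t ^ (-(d : ℝ) / 2) * Real.exp (-c * ‖w - z‖ ^ 2 / t) * ‖y - z‖ ^ (-β)) ≤
      t ^ (-β / 2) * ((∫ v in Metric.ball (0 : EuclideanSpace ℝ (Fin d)) 1, ‖v‖ ^ (-β)) +
        (Real.pi / c) ^ ((d : ℝ) / 2)) := by
  set R := Real.sqrt t with hRdef
  have hR : 0 < R := Real.sqrt_pos.mpr ht
  have hR2 : R ^ 2 = t := Real.sq_sqrt ht.le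
  set f : EuclideanSpace ℝ (Fin d) → ℝ := fun z =>
    t ^ (-(d : ℝ) / 2) * Real.exp (-c * ‖w - z‖ ^ 2 / t) * ‖y - z‖ ^ (-β) with hfdef
  have hfx : ∀ u : EuclideanSpace ℝ (Fin d), f (R • u) =
      (t ^ (-(d : ℝ) / 2) * t ^ (-β / 2)) *
        (Real.exp (-c * ‖(R⁻¹ • w) - u‖ ^ 2) * ‖(R⁻¹ • y) - u‖ ^ (-β)) := by
    intro u
    have hwsub : w - R • u = R • ((R⁻¹ • w) - u) := by
      rw [smul_sub, smul_inv_smul₀ hR.ne']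
    have hysub : y - R • u = R • ((R⁻¹ • y) - u) := by
      rw [smul_sub, smul_inv_smul₀ hR.ne']
    have hnw : ‖w - R • u‖ ^ 2 = t * ‖(R⁻¹ • w) - u‖ ^ 2 := by
      rw [hwsub, norm_smul, Real.norm_eq_abs, abs_of_nonneg hR.le, mul_pow, hR2]
    have hexp : -c * ‖w - R • u‖ ^ 2 / t = -c * ‖(R⁻¹ • w) - u‖ ^ 2 := by
      rw [hnw]; field_simp
    have hny : ‖y - R • u‖ ^ (-β) = t ^ (-β / 2) * ‖(R⁻¹ • y) - u‖ ^ (-β) := by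
      rw [hysub, norm_smul, Real.norm_eq_abs, abs_of_nonneg hR.le,
        Real.mul_rpow hR.le (norm_nonneg _)]
      congr 1
      rw [hRdef, Real.sqrt_eq_rpow, ← Real.rpow_mul ht.le]
      norm_num
      congr 1
      ring
    rw [hfdef]
    simp only
    rw [hexp, hny]
    ring
  have hRd : (R ^ d : ℝ) = t ^ ((d : ℝ) / 2) := by
    rw [← Real.rpow_natCast R d, hRdef, Real.sqrt_eq_rpow, ← Real.rpow_mul ht.le]
    congr 1
    ring
  have hcomp := MeasureTheory.Measure.integral_comp_smul_of_nonneg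
    (volume : Measure (EuclideanSpace ℝ (Fin d))) f R (hR := Real.sqrt_nonneg t)
  rw [finrank_euclideanSpace_fin] at hcomp
  have hint : (∫ z, f z) = (R ^ d : ℝ) * ∫ u, f (R • u) := by
    rw [hcomp, smul_eq_mul, ← mul_assoc, mul_inv_cancel₀ (pow_ne_zero _ hR.ne'), one_mul]
  have hint2 : (∫ u, f (R • u)) = (t ^ (-(d : ℝ) / 2) * t ^ (-β / 2)) *
      ∫ u : EuclideanSpace ℝ (Fin d),
        Real.exp (-c * ‖(R⁻¹ • w) - u‖ ^ 2) * ‖(R⁻¹ • y) - u‖ ^ (-β) := by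
    simp_rw [hfx]
    rw [integral_const_mul]
  have hcollapse : (R ^ d : ℝ) * (t ^ (-(d : ℝ) / 2) * t ^ (-β / 2)) = t ^ (-β / 2) := by
    rw [hRd, ← Real.rpow_add ht, ← Real.rpow_add ht]
    congr 1
    ring
  calc (∫ z, f z) = t ^ (-β / 2) *
      ∫ u : EuclideanSpace ℝ (Fin d),
        Real.exp (-c * ‖(R⁻¹ • w) - u‖ ^ 2) * ‖(R⁻¹ • y) - u‖ ^ (-β) := by
        rw [hint, hint2, ← mul_assoc, hcollapse]
    _ ≤ t ^ (-β / 2) * ((∫ v in Metric.ball (0 : EuclideanSpace ℝ (Fin d)) 1, ‖v‖ ^ (-β)) +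
        (Real.pi / c) ^ ((d : ℝ) / 2)) := by
        refine mul_le_mul_of_nonneg_left ?_ (Real.rpow_nonneg ht.le _)
        exact phi_bound d hβ hβd hc (R⁻¹ • y) (R⁻¹ • w)

/-- Upper bound for the Riesz-kernel-smeared product of two Gaussian kernels:
there is `C > 0` such that for all `t > 0` and `x, w ∈ ℝ^d`,
`∫∫ t^(-d/2) e^(-c|x-y|²/t) t^(-d/2) e^(-c|w-z|²/t) |y-z|^(-β) dy dz ≤ C t^(-β/2)`. -/
theorem gaussian_riesz_double_integral_upper (d : ℕ) (hd : 1 ≤ d) (β c : ℝ)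
    (hβ : 0 < β) (hβd : β < d) (hc : 0 < c) :
    ∃ C : ℝ, 0 < C ∧
      ∀ t : ℝ, 0 < t → ∀ x w : EuclideanSpace ℝ (Fin d),
        (∫ y : EuclideanSpace ℝ (Fin d), ∫ z : EuclideanSpace ℝ (Fin d),
            t ^ (-(d : ℝ) / 2) * Real.exp (-c * ‖x - y‖ ^ 2 / t) *
              (t ^ (-(d : ℝ) / 2) * Real.exp (-c * ‖w - z‖ ^ 2 / t)) * ‖y - z‖ ^ (-β)) ≤
          C * t ^ (-β / 2) := by
  set M : ℝ := ∫ v in Metric.ball (0 : EuclideanSpace ℝ (Fin d)) 1, ‖v‖ ^ (-β) with hM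
  set G : ℝ := (Real.pi / c) ^ ((d : ℝ) / 2) with hG
  have hGpos : 0 < G := Real.rpow_pos_of_pos (div_pos Real.pi_pos hc) _
  have hMnonneg : 0 ≤ M := by
    refine setIntegral_nonneg measurableSet_ball fun v _ => ?_
    exact Real.rpow_nonneg (norm_nonneg _) _
  set K : ℝ := M + G with hK
  have hKpos : 0 < K := by positivity
  refine ⟨K * G, by positivity, ?_⟩
  intro t ht x w
  set A : EuclideanSpace ℝ (Fin d) → ℝ := fun y =>
    t ^ (-(d : ℝ) / 2) * Real.exp (-c * ‖x - y‖ ^ 2 / t) with hA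
  have hAnonneg : ∀ y, 0 ≤ A y := fun y => by
    rw [hA]
    positivity
  have hct : 0 < c / t := div_pos hc ht
  have hexp_eq : ∀ y : EuclideanSpace ℝ (Fin d),
      Real.exp (-(c / t) * ‖x - y‖ ^ 2) = Real.exp (-c * ‖x - y‖ ^ 2 / t) := fun y => by
    congr 1; ring
  have hAint : Integrable A := by
    have h1 := ((gauss_integrable d hct).comp_sub_left x).const_mul (t ^ (-(d : ℝ) / 2))
    refine h1.congr (Eventually.of_forall fun y => ?_)
    simp only [hA, hexp_eq y]
  -- step 1 : rewrite the inner integral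
  have hinner : ∀ y : EuclideanSpace ℝ (Fin d),
      (∫ z : EuclideanSpace ℝ (Fin d),
          t ^ (-(d : ℝ) / 2) * Real.exp (-c * ‖x - y‖ ^ 2 / t) *
            (t ^ (-(d : ℝ) / 2) * Real.exp (-c * ‖w - z‖ ^ 2 / t)) * ‖y - z‖ ^ (-β)) =
        A y * ∫ z : EuclideanSpace ℝ (Fin d),
          t ^ (-(d : ℝ) / 2) * Real.exp (-c * ‖w - z‖ ^ 2 / t) * ‖y - z‖ ^ (-β) := by
    intro y
    rw [← integral_const_mul]
    congr 1
    funext z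
    rw [hA]
    ring
  -- step 2 : apply monotonicity
  have hmono : (∫ y : EuclideanSpace ℝ (Fin d), ∫ z : EuclideanSpace ℝ (Fin d),
      t ^ (-(d : ℝ) / 2) * Real.exp (-c * ‖x - y‖ ^ 2 / t) *
        (t ^ (-(d : ℝ) / 2) * Real.exp (-c * ‖w - z‖ ^ 2 / t)) * ‖y - z‖ ^ (-β)) ≤
      ∫ y : EuclideanSpace ℝ (Fin d), A y * (t ^ (-β / 2) * K) := by
    refine integral_mono_of_nonneg (Eventually.of_forall fun y => ?_)
      (hAint.mul_const _) (Eventually.of_forall fun y => ?_)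
    · refine integral_nonneg fun z => ?_
      have h1 : (0:ℝ) ≤ t ^ (-(d : ℝ) / 2) := Real.rpow_nonneg ht.le _
      have h2 : (0:ℝ) ≤ ‖y - z‖ ^ (-β) := Real.rpow_nonneg (norm_nonneg _) _
      positivity
    · simp only
      rw [hinner y]
      refine mul_le_mul_of_nonneg_left ?_ (hAnonneg y)
      exact inner_bound d hβ hβd hc ht w y
  refine hmono.trans ?_
  -- step 3 : compute the remaining Gaussian integral
  have hAval : (∫ y, A y) = G := by
    rw [hA]
    simp only
    rw [integral_const_mul]
    have h2 : (∫ y : EuclideanSpace ℝ (Fin d), Real.exp (-c * ‖x - y‖ ^ 2 / t)) =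
        ∫ y : EuclideanSpace ℝ (Fin d), Real.exp (-(c / t) * ‖x - y‖ ^ 2) := by
      congr 1
      funext y
      rw [hexp_eq y]
    rw [h2, integral_sub_left_eq_self (fun v : EuclideanSpace ℝ (Fin d) =>
      Real.exp (-(c / t) * ‖v‖ ^ 2)) volume x, gauss_integral d hct]
    have h3 : Real.pi / (c / t) = (Real.pi / c) * t := by
      field_simp
    rw [h3, Real.mul_rpow (div_nonneg Real.pi_pos.le hc.le) ht.le, hG]
    rw [mul_comm ((Real.pi / c) ^ ((d : ℝ) / 2)) (t ^ ((d : ℝ) / 2)), ← mul_assoc,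
      ← Real.rpow_add ht]
    have h4 : (-(d : ℝ) / 2 + (d : ℝ) / 2) = 0 := by ring
    rw [h4, Real.rpow_zero, one_mul]
  have hfinal : (∫ y : EuclideanSpace ℝ (Fin d), A y * (t ^ (-β / 2) * K)) =
      K * G * t ^ (-β / 2) := by
    rw [integral_mul_const, hAval]
    ring
  rw [hfinal]
end

section
/- Let d ≥ 1, α ∈ (1, 2) and 0 < β < d. There exists a constant C > 0 (depending only on d, α, β) such that for every t > 0 and all x, w ∈ ℝ^d, ∫_{ℝ^d} ∫_{ℝ^d} min( t^{−d/α}, t/|x−y|^{α+d} ) · min( t^{−d/α}, t/|w−z|^{α+d} ) · |y−z|^{−β} dy dz ≤ C t^{−β/α}. -/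
open MeasureTheory Metric Set

namespace StableRieszAux

variable {d : ℕ}

local notation "Ed" => EuclideanSpace ℝ (Fin d)

lemma meas_riesz (β : ℝ) : Measurable fun z : Ed => ‖z‖ ^ (-β) :=
  measurable_norm.pow_const (-β)

lemma nontriv (hd : 1 ≤ d) : Nontrivial Ed :=
  Module.finrank_pos_iff (R := ℝ).mp (by rw [finrank_euclideanSpace_fin]; omega)

/-- Integrability of the Riesz kernel on the unit ball. -/
lemma riesz_integrableOn (hd : 1 ≤ d) {β : ℝ} (hβ : 0 < β) (hβd : β < d) :
    IntegrableOn (fun z : Ed => ‖z‖ ^ (-β)) (closedBall 0 1) volume := by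
  haveI := nontriv hd
  constructor
  · exact (meas_riesz β).aestronglyMeasurable.restrict
  · rw [HasFiniteIntegral]
    have hnn : ∀ z : Ed, ‖‖z‖ ^ (-β)‖ₑ = ENNReal.ofReal (‖z‖ ^ (-β)) := fun z =>
      Real.enorm_eq_ofReal (Real.rpow_nonneg (norm_nonneg _) _)
    simp_rw [hnn]
    set a : ℝ := (2 : ℝ)⁻¹ with ha
    have ha0 : 0 < a := by norm_num
    have ha1 : a < 1 := by norm_num
    set A : ℕ → Set Ed := fun n => closedBall 0 (a ^ n) \ ball 0 (a ^ (n + 1)) with hA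
    have cover : closedBall (0 : Ed) 1 ⊆ {0} ∪ ⋃ n, A n := by
      intro z hz
      rcases eq_or_ne z 0 with rfl | hz0
      · exact Or.inl rfl
      refine Or.inr ?_
      have hz1 : ‖z‖ ≤ 1 := mem_closedBall_zero_iff.1 hz
      have hzpos : 0 < ‖z‖ := norm_pos_iff.2 hz0
      have hex : ∃ n, a ^ n < ‖z‖ := exists_pow_lt_of_lt_one hzpos ha1
      classical
      have hNlt : a ^ (Nat.find hex) < ‖z‖ := Nat.find_spec hex
      have hN0 : Nat.find hex ≠ 0 := by
        intro h
        rw [h, pow_zero] at hNlt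
        exact absurd hz1 (not_le.2 hNlt)
      obtain ⟨m, hm2⟩ := Nat.exists_eq_succ_of_ne_zero hN0
      rw [hm2] at hNlt
      have hm : ¬ a ^ m < ‖z‖ := Nat.find_min hex (by omega)
      refine mem_iUnion.2 ⟨m, ?_⟩
      constructor
      · exact mem_closedBall_zero_iff.2 (not_lt.1 hm)
      · simp only [mem_ball_zero_iff, not_lt]
        exact le_of_lt hNlt
    calc ∫⁻ z in closedBall (0 : Ed) 1, ENNReal.ofReal (‖z‖ ^ (-β)) ∂volume
        ≤ ∫⁻ z in ({0} ∪ ⋃ n, A n : Set Ed), ENNReal.ofReal (‖z‖ ^ (-β)) ∂volume :=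
          lintegral_mono_set cover
      _ ≤ (∫⁻ z in ({0} : Set Ed), ENNReal.ofReal (‖z‖ ^ (-β)) ∂volume)
            + ∫⁻ z in (⋃ n, A n), ENNReal.ofReal (‖z‖ ^ (-β)) ∂volume :=
          lintegral_union_le _ _ _
      _ = ∫⁻ z in (⋃ n, A n), ENNReal.ofReal (‖z‖ ^ (-β)) ∂volume := by
          rw [setLIntegral_measure_zero _ _ (measure_singleton _), zero_add]
      _ ≤ ∑' n, ∫⁻ z in A n, ENNReal.ofReal (‖z‖ ^ (-β)) ∂volume := lintegral_iUnion_le _ _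
      _ ≤ ∑' n, ENNReal.ofReal (a ^ (-β)) * ENNReal.ofReal (a ^ ((d : ℝ) - β)) ^ n
            * volume (ball (0 : Ed) 1) := by
          refine ENNReal.tsum_le_tsum fun n => ?_
          have key : ∀ z ∈ A n, ENNReal.ofReal (‖z‖ ^ (-β))
              ≤ ENNReal.ofReal ((a ^ (n + 1) : ℝ) ^ (-β)) := by
            intro z hz
            refine ENNReal.ofReal_le_ofReal ?_
            have h1 : a ^ (n + 1) ≤ ‖z‖ := by
              have := hz.2
              simpa only [mem_ball_zero_iff, not_lt] using this
            exact Real.rpow_le_rpow_of_nonpos (pow_pos ha0 _) h1 (neg_nonpos.2 hβ.le)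
          calc ∫⁻ z in A n, ENNReal.ofReal (‖z‖ ^ (-β)) ∂volume
              ≤ ∫⁻ _ in A n, ENNReal.ofReal ((a ^ (n + 1) : ℝ) ^ (-β)) ∂volume :=
                setLIntegral_mono measurable_const key
            _ = ENNReal.ofReal ((a ^ (n + 1) : ℝ) ^ (-β)) * volume (A n) := setLIntegral_const _ _
            _ ≤ ENNReal.ofReal ((a ^ (n + 1) : ℝ) ^ (-β)) * volume (closedBall (0 : Ed) (a ^ n)) :=
                mul_le_mul_right (measure_mono diff_subset) _
            _ = ENNReal.ofReal ((a ^ (n + 1) : ℝ) ^ (-β)) * (ENNReal.ofReal ((a ^ n) ^ d)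
                  * volume (ball (0 : Ed) 1)) := by
                rw [Measure.addHaar_closedBall _ _ (pow_nonneg ha0.le _), finrank_euclideanSpace_fin]
            _ = ENNReal.ofReal (a ^ (-β)) * ENNReal.ofReal (a ^ ((d : ℝ) - β)) ^ n
                  * volume (ball (0 : Ed) 1) := by
                rw [← mul_assoc, ← ENNReal.ofReal_pow (Real.rpow_nonneg ha0.le _),
                  ← ENNReal.ofReal_mul (Real.rpow_nonneg (pow_nonneg ha0.le _) _),
                  ← ENNReal.ofReal_mul (Real.rpow_nonneg ha0.le _)]
                congr 2
                rw [← Real.rpow_natCast a (n + 1), ← Real.rpow_natCast (a ^ ((d : ℝ) - β)) n,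
                  ← Real.rpow_mul ha0.le, ← Real.rpow_natCast (a ^ n) d,
                  ← Real.rpow_natCast a n, ← Real.rpow_mul ha0.le, ← Real.rpow_mul ha0.le,
                  ← Real.rpow_add ha0, ← Real.rpow_add ha0]
                congr 1
                push_cast
                ring
      _ = ENNReal.ofReal (a ^ (-β)) * (1 - ENNReal.ofReal (a ^ ((d : ℝ) - β)))⁻¹
            * volume (ball (0 : Ed) 1) := by
          rw [ENNReal.tsum_mul_right, ENNReal.tsum_mul_left, ENNReal.tsum_geometric]
      _ < ⊤ := by
          have hq : ENNReal.ofReal (a ^ ((d : ℝ) - β)) < 1 := by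
            rw [← ENNReal.ofReal_one]
            exact ENNReal.ofReal_lt_ofReal_iff_of_nonneg (Real.rpow_nonneg ha0.le _) |>.2
              (Real.rpow_lt_one ha0.le ha1 (by linarith))
          refine ENNReal.mul_lt_top (ENNReal.mul_lt_top ENNReal.ofReal_lt_top ?_) measure_ball_lt_top
          exact ENNReal.inv_lt_top.2 (tsub_pos_of_lt hq)

/-- Integrability of `‖z‖^(-s)` outside the unit ball, for `s > d`. -/
lemma tail_integrableOn (hd : 1 ≤ d) {s : ℝ} (hs : (d : ℝ) < s) :
    IntegrableOn (fun z : Ed => ‖z‖ ^ (-s)) ((ball (0 : Ed) 1)ᶜ) volume := by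
  have hmain : Integrable (fun z : Ed => (2 : ℝ) ^ (s / 2) * ((1 + ‖z‖ ^ 2) ^ (-s / 2))) volume := by
    exact (integrable_rpow_neg_one_add_norm_sq (by rwa [finrank_euclideanSpace_fin])).const_mul _
  refine Integrable.mono' hmain.integrableOn ((meas_riesz s).aestronglyMeasurable.restrict) ?_
  refine (ae_restrict_iff' measurableSet_ball.compl).2 (ae_of_all _ fun z hz => ?_)
  have h1 : (1 : ℝ) ≤ ‖z‖ := by
    simpa only [mem_compl_iff, mem_ball_zero_iff, not_lt] using hz
  have hz0 : (0 : ℝ) < ‖z‖ := lt_of_lt_of_le one_pos h1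
  rw [Real.norm_eq_abs, abs_of_nonneg (Real.rpow_nonneg (norm_nonneg _) _)]
  have hsq : (1 : ℝ) + ‖z‖ ^ 2 ≤ 2 * ‖z‖ ^ 2 := by nlinarith
  have e1 : ‖z‖ ^ (-s) = ((‖z‖ : ℝ) ^ (2 : ℕ)) ^ (-s / 2) := by
    rw [← Real.rpow_natCast ‖z‖ 2, ← Real.rpow_mul (norm_nonneg _)]
    congr 1
    ring
  have e2 : ((‖z‖ : ℝ) ^ (2 : ℕ)) ^ (-s / 2) = (2 : ℝ) ^ (s / 2) * (2 * ‖z‖ ^ 2) ^ (-s / 2) := by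
    rw [Real.mul_rpow (by norm_num) (by positivity), ← mul_assoc, ← Real.rpow_add (by norm_num),
      show s / 2 + -s / 2 = 0 by ring, Real.rpow_zero, one_mul]
  rw [e1, e2]
  have h3 : (2 * ‖z‖ ^ 2 : ℝ) ^ (-s / 2) ≤ (1 + ‖z‖ ^ 2) ^ (-s / 2) :=
    Real.rpow_le_rpow_of_nonpos (by positivity) hsq (by linarith)
  exact mul_le_mul_of_nonneg_left h3 (by positivity)

/-- Scaling: the Riesz kernel integral over `closedBall 0 r`. -/
lemma riesz_scaled (hd : 1 ≤ d) {β : ℝ} (hβ : 0 < β) (hβd : β < d) {r : ℝ} (hr : 0 < r) :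
    Integrable ((closedBall (0 : Ed) r).indicator (fun z => ‖z‖ ^ (-β))) volume ∧
    ∫ z, (closedBall (0 : Ed) r).indicator (fun z : Ed => ‖z‖ ^ (-β)) z
      = r ^ ((d : ℝ) - β) * ∫ z in closedBall (0 : Ed) 1, ‖z‖ ^ (-β) := by
  have hint1 : Integrable ((closedBall (0 : Ed) 1).indicator (fun z => ‖z‖ ^ (-β))) volume :=
    (integrable_indicator_iff measurableSet_closedBall).2 (riesz_integrableOn hd hβ hβd)
  have key : ∀ x : Ed, (closedBall (0 : Ed) 1).indicator (fun z => ‖z‖ ^ (-β)) (r⁻¹ • x)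
      = r ^ β * (closedBall (0 : Ed) r).indicator (fun z : Ed => ‖z‖ ^ (-β)) x := by
    intro x
    have hnorm : ‖r⁻¹ • x‖ = r⁻¹ * ‖x‖ := by
      rw [norm_smul, Real.norm_eq_abs, abs_of_nonneg (inv_nonneg.2 hr.le)]
    by_cases hx : ‖x‖ ≤ r
    · have hmem1 : r⁻¹ • x ∈ closedBall (0 : Ed) 1 := by
        rw [mem_closedBall_zero_iff, hnorm]
        calc r⁻¹ * ‖x‖ ≤ r⁻¹ * r := by
              exact mul_le_mul_of_nonneg_left hx (inv_nonneg.2 hr.le)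
          _ = 1 := inv_mul_cancel₀ hr.ne'
      have hmem2 : x ∈ closedBall (0 : Ed) r := mem_closedBall_zero_iff.2 hx
      rw [indicator_of_mem hmem1, indicator_of_mem hmem2, hnorm,
        Real.mul_rpow (inv_nonneg.2 hr.le) (norm_nonneg _), Real.inv_rpow hr.le,
        ← Real.rpow_neg hr.le, neg_neg]
    · have hmem1 : r⁻¹ • x ∉ closedBall (0 : Ed) 1 := by
        rw [mem_closedBall_zero_iff, hnorm]
        intro hcon
        apply hx
        calc ‖x‖ = r * (r⁻¹ * ‖x‖) := by field_simp
          _ ≤ r * 1 := mul_le_mul_of_nonneg_left hcon hr.le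
          _ = r := mul_one r
      have hmem2 : x ∉ closedBall (0 : Ed) r := fun h => hx (mem_closedBall_zero_iff.1 h)
      rw [indicator_of_notMem hmem1, indicator_of_notMem hmem2, mul_zero]
  have hcomp : Integrable (fun x : Ed =>
      (closedBall (0 : Ed) 1).indicator (fun z => ‖z‖ ^ (-β)) (r⁻¹ • x)) volume :=
    (integrable_comp_smul_iff volume _ (inv_ne_zero hr.ne')).2 hint1
  have hrβ : (0 : ℝ) < r ^ β := Real.rpow_pos_of_pos hr _
  constructor
  · have : Integrable (fun x : Ed => (r ^ β)⁻¹ *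
        ((closedBall (0 : Ed) 1).indicator (fun z => ‖z‖ ^ (-β)) (r⁻¹ • x))) volume :=
      hcomp.const_mul _
    refine this.congr (ae_of_all _ fun x => ?_)
    simp only [key x]
    rw [← mul_assoc, inv_mul_cancel₀ hrβ.ne', one_mul]
  · have e1 : ∫ x, (closedBall (0 : Ed) 1).indicator (fun z : Ed => ‖z‖ ^ (-β)) (r⁻¹ • x)
        = r ^ d * ∫ z, (closedBall (0 : Ed) 1).indicator (fun z : Ed => ‖z‖ ^ (-β)) z := by
      rw [Measure.integral_comp_inv_smul_of_nonneg volume _ hr.le, finrank_euclideanSpace_fin,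
        smul_eq_mul]
    have e2 : ∫ x, (closedBall (0 : Ed) 1).indicator (fun z : Ed => ‖z‖ ^ (-β)) (r⁻¹ • x)
        = r ^ β * ∫ x, (closedBall (0 : Ed) r).indicator (fun z : Ed => ‖z‖ ^ (-β)) x := by
      simp_rw [key]
      rw [integral_const_mul]
    have : r ^ β * ∫ x, (closedBall (0 : Ed) r).indicator (fun z : Ed => ‖z‖ ^ (-β)) x
        = r ^ d * ∫ z in closedBall (0 : Ed) 1, ‖z‖ ^ (-β) := by
      rw [← e2, e1, integral_indicator measurableSet_closedBall]
    calc ∫ x, (closedBall (0 : Ed) r).indicator (fun z : Ed => ‖z‖ ^ (-β)) x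
        = (r ^ β)⁻¹ * (r ^ β * ∫ x, (closedBall (0 : Ed) r).indicator
            (fun z : Ed => ‖z‖ ^ (-β)) x) := by
          rw [← mul_assoc, inv_mul_cancel₀ hrβ.ne', one_mul]
      _ = (r ^ β)⁻¹ * (r ^ d * ∫ z in closedBall (0 : Ed) 1, ‖z‖ ^ (-β)) := by rw [this]
      _ = r ^ ((d : ℝ) - β) * ∫ z in closedBall (0 : Ed) 1, ‖z‖ ^ (-β) := by
          rw [← mul_assoc]
          congr 1
          rw [← Real.rpow_neg hr.le, ← Real.rpow_natCast r d, ← Real.rpow_add hr]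
          congr 1
          ring

/-- Scaling: the tail integral over the complement of `ball 0 r`. -/
lemma tail_scaled (hd : 1 ≤ d) {s : ℝ} (hs : (d : ℝ) < s) {r : ℝ} (hr : 0 < r) :
    Integrable (((ball (0 : Ed) r)ᶜ).indicator (fun z => ‖z‖ ^ (-s))) volume ∧
    ∫ z, ((ball (0 : Ed) r)ᶜ).indicator (fun z : Ed => ‖z‖ ^ (-s)) z
      = r ^ ((d : ℝ) - s) * ∫ z in (ball (0 : Ed) 1)ᶜ, ‖z‖ ^ (-s) := by
  have hint1 : Integrable (((ball (0 : Ed) 1)ᶜ).indicator (fun z => ‖z‖ ^ (-s))) volume :=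
    (integrable_indicator_iff measurableSet_ball.compl).2 (tail_integrableOn hd hs)
  have key : ∀ x : Ed, ((ball (0 : Ed) 1)ᶜ).indicator (fun z => ‖z‖ ^ (-s)) (r⁻¹ • x)
      = r ^ s * ((ball (0 : Ed) r)ᶜ).indicator (fun z : Ed => ‖z‖ ^ (-s)) x := by
    intro x
    have hnorm : ‖r⁻¹ • x‖ = r⁻¹ * ‖x‖ := by
      rw [norm_smul, Real.norm_eq_abs, abs_of_nonneg (inv_nonneg.2 hr.le)]
    by_cases hx : r ≤ ‖x‖
    · have hmem1 : r⁻¹ • x ∈ (ball (0 : Ed) 1)ᶜ := by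
        simp only [mem_compl_iff, mem_ball_zero_iff, not_lt, hnorm]
        calc (1 : ℝ) = r⁻¹ * r := (inv_mul_cancel₀ hr.ne').symm
          _ ≤ r⁻¹ * ‖x‖ := mul_le_mul_of_nonneg_left hx (inv_nonneg.2 hr.le)
      have hmem2 : x ∈ (ball (0 : Ed) r)ᶜ := by
        simp only [mem_compl_iff, mem_ball_zero_iff, not_lt]
        exact hx
      rw [indicator_of_mem hmem1, indicator_of_mem hmem2, hnorm,
        Real.mul_rpow (inv_nonneg.2 hr.le) (norm_nonneg _), Real.inv_rpow hr.le,
        ← Real.rpow_neg hr.le, neg_neg]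
    · have hmem1 : r⁻¹ • x ∉ (ball (0 : Ed) 1)ᶜ := by
        simp only [mem_compl_iff, mem_ball_zero_iff, not_lt, hnorm, not_le]
        calc r⁻¹ * ‖x‖ < r⁻¹ * r :=
              mul_lt_mul_of_pos_left (not_le.1 hx) (inv_pos.2 hr)
          _ = 1 := inv_mul_cancel₀ hr.ne'
      have hmem2 : x ∉ (ball (0 : Ed) r)ᶜ := by
        simp only [mem_compl_iff, mem_ball_zero_iff, not_lt, not_le]
        exact not_le.1 hx
      rw [indicator_of_notMem hmem1, indicator_of_notMem hmem2, mul_zero]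
  have hcomp : Integrable (fun x : Ed =>
      ((ball (0 : Ed) 1)ᶜ).indicator (fun z => ‖z‖ ^ (-s)) (r⁻¹ • x)) volume :=
    (integrable_comp_smul_iff volume _ (inv_ne_zero hr.ne')).2 hint1
  have hrs : (0 : ℝ) < r ^ s := Real.rpow_pos_of_pos hr _
  constructor
  · have : Integrable (fun x : Ed => (r ^ s)⁻¹ *
        (((ball (0 : Ed) 1)ᶜ).indicator (fun z => ‖z‖ ^ (-s)) (r⁻¹ • x))) volume :=
      hcomp.const_mul _
    refine this.congr (ae_of_all _ fun x => ?_)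
    simp only [key x]
    rw [← mul_assoc, inv_mul_cancel₀ hrs.ne', one_mul]
  · have e1 : ∫ x, ((ball (0 : Ed) 1)ᶜ).indicator (fun z : Ed => ‖z‖ ^ (-s)) (r⁻¹ • x)
        = r ^ d * ∫ z, ((ball (0 : Ed) 1)ᶜ).indicator (fun z : Ed => ‖z‖ ^ (-s)) z := by
      rw [Measure.integral_comp_inv_smul_of_nonneg volume _ hr.le, finrank_euclideanSpace_fin,
        smul_eq_mul]
    have e2 : ∫ x, ((ball (0 : Ed) 1)ᶜ).indicator (fun z : Ed => ‖z‖ ^ (-s)) (r⁻¹ • x)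
        = r ^ s * ∫ x, ((ball (0 : Ed) r)ᶜ).indicator (fun z : Ed => ‖z‖ ^ (-s)) x := by
      simp_rw [key]
      rw [integral_const_mul]
    have heq : r ^ s * ∫ x, ((ball (0 : Ed) r)ᶜ).indicator (fun z : Ed => ‖z‖ ^ (-s)) x
        = r ^ d * ∫ z in (ball (0 : Ed) 1)ᶜ, ‖z‖ ^ (-s) := by
      rw [← e2, e1, integral_indicator measurableSet_ball.compl]
    calc ∫ x, ((ball (0 : Ed) r)ᶜ).indicator (fun z : Ed => ‖z‖ ^ (-s)) x
        = (r ^ s)⁻¹ * (r ^ s * ∫ x, ((ball (0 : Ed) r)ᶜ).indicator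
            (fun z : Ed => ‖z‖ ^ (-s)) x) := by
          rw [← mul_assoc, inv_mul_cancel₀ hrs.ne', one_mul]
      _ = (r ^ s)⁻¹ * (r ^ d * ∫ z in (ball (0 : Ed) 1)ᶜ, ‖z‖ ^ (-s)) := by rw [heq]
      _ = r ^ ((d : ℝ) - s) * ∫ z in (ball (0 : Ed) 1)ᶜ, ‖z‖ ^ (-s) := by
          rw [← mul_assoc]
          congr 1
          rw [← Real.rpow_neg hr.le, ← Real.rpow_natCast r d, ← Real.rpow_add hr]
          congr 1
          ring

/-- The α-stable profile. -/
noncomputable def prof (d : ℕ) (α t : ℝ) (u : EuclideanSpace ℝ (Fin d)) : ℝ :=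
  min (t ^ (-(d : ℝ) / α)) (t / ‖u‖ ^ (α + (d : ℝ)))

noncomputable def Vd (d : ℕ) : ℝ := (volume (ball (0 : EuclideanSpace ℝ (Fin d)) 1)).toReal

noncomputable def K2c (d : ℕ) (α : ℝ) : ℝ :=
  ∫ z in (ball (0 : EuclideanSpace ℝ (Fin d)) 1)ᶜ, ‖z‖ ^ (-(α + (d : ℝ)))

noncomputable def K1c (d : ℕ) (β : ℝ) : ℝ :=
  ∫ z in closedBall (0 : EuclideanSpace ℝ (Fin d)) 1, ‖z‖ ^ (-β)

lemma prof_nonneg {α t : ℝ} (ht : 0 < t) (u : Ed) : 0 ≤ prof d α t u :=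
  le_min (Real.rpow_nonneg ht.le _) (div_nonneg ht.le (Real.rpow_nonneg (norm_nonneg _) _))

lemma prof_meas (α t : ℝ) : Measurable (prof d α t) :=
  measurable_const.min (measurable_const.div (measurable_norm.pow_const _))

lemma rfact {α t : ℝ} (hα0 : 0 < α) (ht : 0 < t) (y : ℝ) :
    (t ^ α⁻¹) ^ y = t ^ (y / α) := by
  rw [← Real.rpow_mul ht.le, inv_mul_eq_div]

lemma prof_le {α t : ℝ} (hα0 : 0 < α) (ht : 0 < t) (u : Ed) :
    prof d α t u ≤ (closedBall (0 : Ed) (t ^ α⁻¹)).indicator (fun _ => t ^ (-(d : ℝ) / α)) u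
      + ((ball (0 : Ed) (t ^ α⁻¹))ᶜ).indicator (fun z : Ed => t * ‖z‖ ^ (-(α + (d : ℝ)))) u := by
  have hr : (0 : ℝ) < t ^ α⁻¹ := Real.rpow_pos_of_pos ht _
  by_cases hu : ‖u‖ < t ^ α⁻¹
  · have h1 : u ∈ closedBall (0 : Ed) (t ^ α⁻¹) := mem_closedBall_zero_iff.2 hu.le
    have h2 : u ∉ (ball (0 : Ed) (t ^ α⁻¹))ᶜ := by
      simp only [mem_compl_iff, mem_ball_zero_iff, not_not]
      exact hu
    rw [indicator_of_mem h1, indicator_of_notMem h2, add_zero]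
    exact min_le_left _ _
  · have h2 : u ∈ (ball (0 : Ed) (t ^ α⁻¹))ᶜ := by
      simp only [mem_compl_iff, mem_ball_zero_iff, not_lt]
      exact not_lt.1 hu
    have hu0 : (0 : ℝ) < ‖u‖ := lt_of_lt_of_le hr (not_lt.1 hu)
    rw [indicator_of_mem h2]
    refine le_add_of_nonneg_of_le (indicator_nonneg (fun _ _ => Real.rpow_nonneg ht.le _) _) ?_
    rw [Real.rpow_neg (norm_nonneg _), ← div_eq_mul_inv]
    exact min_le_right _ _

lemma prof_bound_integrable {α t : ℝ} (hd : 1 ≤ d) (hα0 : 0 < α) (hαd : (d : ℝ) < α + d)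
    (ht : 0 < t) :
    Integrable (fun u : Ed => (closedBall (0 : Ed) (t ^ α⁻¹)).indicator
        (fun _ => t ^ (-(d : ℝ) / α)) u
      + ((ball (0 : Ed) (t ^ α⁻¹))ᶜ).indicator (fun z : Ed => t * ‖z‖ ^ (-(α + (d : ℝ)))) u)
      volume ∧
    (∫ u : Ed, ((closedBall (0 : Ed) (t ^ α⁻¹)).indicator (fun _ => t ^ (-(d : ℝ) / α)) u
      + ((ball (0 : Ed) (t ^ α⁻¹))ᶜ).indicator (fun z : Ed => t * ‖z‖ ^ (-(α + (d : ℝ)))) u))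
      = Vd d + K2c d α := by
  have hr : (0 : ℝ) < t ^ α⁻¹ := Real.rpow_pos_of_pos ht _
  have hg1 : Integrable ((closedBall (0 : Ed) (t ^ α⁻¹)).indicator
      (fun _ : Ed => t ^ (-(d : ℝ) / α))) volume := by
    rw [integrable_indicator_iff measurableSet_closedBall]
    exact integrableOn_const measure_closedBall_lt_top.ne
  obtain ⟨hg2i, hg2v⟩ := tail_scaled hd hαd hr
  have hg2 : Integrable (fun u : Ed =>
      ((ball (0 : Ed) (t ^ α⁻¹))ᶜ).indicator (fun z : Ed => t * ‖z‖ ^ (-(α + (d : ℝ)))) u)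
      volume := by
    have := hg2i.const_mul t
    refine this.congr (ae_of_all _ fun x => ?_)
    simp only [indicator]
    split <;> simp
  refine ⟨hg1.add hg2, ?_⟩
  rw [integral_add hg1 hg2]
  have i1 : ∫ u : Ed, (closedBall (0 : Ed) (t ^ α⁻¹)).indicator
      (fun _ : Ed => t ^ (-(d : ℝ) / α)) u = Vd d := by
    rw [integral_indicator_const _ measurableSet_closedBall, smul_eq_mul, measureReal_def,
      Measure.addHaar_closedBall _ _ hr.le, finrank_euclideanSpace_fin,
      ENNReal.toReal_mul, ENNReal.toReal_ofReal (pow_nonneg hr.le _)]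
    have : ((t ^ α⁻¹) ^ (d : ℕ) : ℝ) = t ^ ((d : ℝ) / α) := by
      rw [← Real.rpow_natCast (t ^ α⁻¹) d, rfact hα0 ht]
    rw [this, Vd, mul_comm (t ^ ((d : ℝ) / α)) _, mul_assoc, ← Real.rpow_add ht,
      show (d : ℝ) / α + -(d : ℝ) / α = 0 by ring, Real.rpow_zero, mul_one]
  have i2 : ∫ u : Ed, ((ball (0 : Ed) (t ^ α⁻¹))ᶜ).indicator
      (fun z : Ed => t * ‖z‖ ^ (-(α + (d : ℝ)))) u = K2c d α := by
    have e : ∀ u : Ed, ((ball (0 : Ed) (t ^ α⁻¹))ᶜ).indicator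
        (fun z : Ed => t * ‖z‖ ^ (-(α + (d : ℝ)))) u
        = t * ((ball (0 : Ed) (t ^ α⁻¹))ᶜ).indicator (fun z : Ed => ‖z‖ ^ (-(α + (d : ℝ)))) u := by
      intro u
      simp only [indicator]
      split <;> simp
    simp_rw [e]
    rw [integral_const_mul, hg2v]
    have : ((t ^ α⁻¹) ^ ((d : ℝ) - (α + d)) : ℝ) = t⁻¹ := by
      rw [rfact hα0 ht]
      have : ((d : ℝ) - (α + d)) / α = -1 := by
        rw [div_eq_iff hα0.ne']
        ring
      rw [this, Real.rpow_neg_one]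
    rw [this, ← mul_assoc, mul_inv_cancel₀ ht.ne', one_mul, K2c]
  rw [i1, i2]

lemma prof_integrable {α t : ℝ} (hd : 1 ≤ d) (hα0 : 0 < α) (hαd : (d : ℝ) < α + d)
    (ht : 0 < t) :
    Integrable (prof d α t) volume ∧ ∫ u, prof d α t u ≤ Vd d + K2c d α := by
  obtain ⟨hBi, hBv⟩ := prof_bound_integrable (d := d) hd hα0 hαd ht
  have hmono : ∀ u : Ed, prof d α t u ≤ _ := prof_le hα0 ht
  constructor
  · refine hBi.mono' (prof_meas α t).aestronglyMeasurable (ae_of_all _ fun u => ?_)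
    rw [Real.norm_eq_abs, abs_of_nonneg (prof_nonneg ht u)]
    exact prof_le hα0 ht u
  · rw [← hBv]
    exact integral_mono_of_nonneg (ae_of_all _ fun u => prof_nonneg ht u) hBi
      (ae_of_all _ fun u => prof_le hα0 ht u)

lemma inner_est {α β t : ℝ} (hd : 1 ≤ d) (hα0 : 0 < α) (hβ : 0 < β) (hβd : β < d)
    (ht : 0 < t) (y w : Ed) :
    ∫ z : Ed, prof d α t (w - z) * ‖y - z‖ ^ (-β)
      ≤ (K1c d β + (Vd d + K2c d α)) * t ^ (-β / α) := by
  have hαd : (d : ℝ) < α + d := by linarith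
  have hr : (0 : ℝ) < t ^ α⁻¹ := Real.rpow_pos_of_pos ht _
  obtain ⟨hindi, hindv⟩ := riesz_scaled (d := d) hd hβ hβd hr
  obtain ⟨hprofi, hprofv⟩ := prof_integrable (d := d) hd hα0 hαd ht
  set h1 : Ed → ℝ := fun z => t ^ (-(d : ℝ) / α) *
    (closedBall (0 : Ed) (t ^ α⁻¹)).indicator (fun u : Ed => ‖u‖ ^ (-β)) (y - z) with hh1
  set h2 : Ed → ℝ := fun z => t ^ (-β / α) * prof d α t (w - z) with hh2
  have h1i : Integrable h1 volume := (hindi.comp_sub_left y).const_mul _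
  have h2i : Integrable h2 volume := (hprofi.comp_sub_left w).const_mul _
  have hpt : ∀ z : Ed, prof d α t (w - z) * ‖y - z‖ ^ (-β) ≤ h1 z + h2 z := by
    intro z
    by_cases hc : ‖y - z‖ ≤ t ^ α⁻¹
    · have hmem : y - z ∈ closedBall (0 : Ed) (t ^ α⁻¹) := mem_closedBall_zero_iff.2 hc
      have e1 : h1 z = t ^ (-(d : ℝ) / α) * ‖y - z‖ ^ (-β) := by
        simp only [hh1, indicator_of_mem hmem]
      refine le_add_of_le_of_nonneg ?_
        (mul_nonneg (Real.rpow_nonneg ht.le _) (prof_nonneg ht _))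
      rw [e1]
      exact mul_le_mul_of_nonneg_right (min_le_left _ _) (Real.rpow_nonneg (norm_nonneg _) _)
    · have hlt : t ^ α⁻¹ < ‖y - z‖ := not_le.1 hc
      have hb : ‖y - z‖ ^ (-β) ≤ t ^ (-β / α) := by
        rw [← rfact hα0 ht (-β), neg_div] at *
        exact Real.rpow_le_rpow_of_nonpos hr hlt.le (neg_nonpos.2 hβ.le)
      refine le_add_of_nonneg_of_le
        (mul_nonneg (Real.rpow_nonneg ht.le _)
          (indicator_nonneg (fun u _ => Real.rpow_nonneg (norm_nonneg _) _) _)) ?_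
      simp only [hh2]
      rw [mul_comm (t ^ (-β / α))]
      exact mul_le_mul_of_nonneg_left hb (prof_nonneg ht _)
  have hint1 : ∫ z, h1 z = K1c d β * t ^ (-β / α) := by
    simp only [hh1]
    rw [integral_const_mul]
    have : ∫ z : Ed, (closedBall (0 : Ed) (t ^ α⁻¹)).indicator
        (fun u : Ed => ‖u‖ ^ (-β)) (y - z) = ∫ u : Ed, (closedBall (0 : Ed) (t ^ α⁻¹)).indicator
        (fun u : Ed => ‖u‖ ^ (-β)) u := integral_sub_left_eq_self _ _ y
    rw [this, hindv, rfact hα0 ht, ← mul_assoc, ← Real.rpow_add ht]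
    rw [show -(d : ℝ) / α + ((d : ℝ) - β) / α = -β / α by rw [← add_div]; congr 1; ring]
    rw [mul_comm, K1c]
  have hint2 : ∫ z, h2 z ≤ (Vd d + K2c d α) * t ^ (-β / α) := by
    simp only [hh2]
    rw [integral_const_mul,
      integral_sub_left_eq_self (fun z : Ed => prof d α t z) volume w]
    rw [mul_comm ((Vd d + K2c d α)) _]
    exact mul_le_mul_of_nonneg_left hprofv (Real.rpow_nonneg ht.le _)
  calc ∫ z : Ed, prof d α t (w - z) * ‖y - z‖ ^ (-β)
      ≤ ∫ z, (h1 z + h2 z) :=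
        integral_mono_of_nonneg
          (ae_of_all _ fun z => mul_nonneg (prof_nonneg ht _)
            (Real.rpow_nonneg (norm_nonneg _) _))
          (h1i.add h2i) (ae_of_all _ hpt)
    _ = (∫ z, h1 z) + ∫ z, h2 z := integral_add h1i h2i
    _ ≤ K1c d β * t ^ (-β / α) + (Vd d + K2c d α) * t ^ (-β / α) := by
        rw [hint1]
        exact add_le_add_right hint2 _
    _ = (K1c d β + (Vd d + K2c d α)) * t ^ (-β / α) := by ring

end StableRieszAux

open StableRieszAux in
/-- Upper bound for the Riesz-kernel-smeared product of two α-stable kernel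
profiles: there is `C > 0` such that for all `t > 0` and `x, w ∈ ℝ^d`,
`∫∫ min(t^(-d/α), t/|x-y|^(α+d)) min(t^(-d/α), t/|w-z|^(α+d)) |y-z|^(-β) dy dz
  ≤ C t^(-β/α)`. -/
theorem stable_riesz_double_integral_upper (d : ℕ) (hd : 1 ≤ d) (α β : ℝ)
    (hα : α ∈ Set.Ioo (1 : ℝ) 2) (hβ : 0 < β) (hβd : β < d) :
    ∃ C : ℝ, 0 < C ∧
      ∀ t : ℝ, 0 < t → ∀ x w : EuclideanSpace ℝ (Fin d),
        (∫ y : EuclideanSpace ℝ (Fin d), ∫ z : EuclideanSpace ℝ (Fin d),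
            min (t ^ (-(d : ℝ) / α)) (t / ‖x - y‖ ^ (α + (d : ℝ))) *
              min (t ^ (-(d : ℝ) / α)) (t / ‖w - z‖ ^ (α + (d : ℝ))) * ‖y - z‖ ^ (-β)) ≤
          C * t ^ (-β / α) := by
  classical
  have hα0 : (0 : ℝ) < α := lt_trans one_pos hα.1
  have hV : 0 < Vd d := by
    rw [Vd]
    exact ENNReal.toReal_pos (measure_ball_pos volume _ one_pos).ne' measure_ball_lt_top.ne
  have hK2 : 0 ≤ K2c d α :=
    setIntegral_nonneg measurableSet_ball.compl fun z _ => Real.rpow_nonneg (norm_nonneg _) _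
  have hK1 : 0 ≤ K1c d β :=
    setIntegral_nonneg measurableSet_closedBall fun z _ => Real.rpow_nonneg (norm_nonneg _) _
  have hC1pos : 0 < Vd d + K2c d α := add_pos_of_pos_of_nonneg hV hK2
  have hC2pos : 0 < K1c d β + (Vd d + K2c d α) := add_pos_of_nonneg_of_pos hK1 hC1pos
  refine ⟨(Vd d + K2c d α) * (K1c d β + (Vd d + K2c d α)),
    mul_pos hC1pos hC2pos, fun t ht x w => ?_⟩
  have hαd : (d : ℝ) < α + d := by linarith
  obtain ⟨hpi, hpv⟩ := prof_integrable (d := d) hd hα0 hαd ht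
  have hτ : (0 : ℝ) ≤ t ^ (-β / α) := Real.rpow_nonneg ht.le _
  show (∫ y : EuclideanSpace ℝ (Fin d), ∫ z : EuclideanSpace ℝ (Fin d),
      prof d α t (x - y) * prof d α t (w - z) * ‖y - z‖ ^ (-β))
    ≤ (Vd d + K2c d α) * (K1c d β + (Vd d + K2c d α)) * t ^ (-β / α)
  have hGint : Integrable (fun y : EuclideanSpace ℝ (Fin d) =>
      prof d α t (x - y) * ((K1c d β + (Vd d + K2c d α)) * t ^ (-β / α))) volume :=
    (hpi.comp_sub_left x).mul_const _
  have step : ∀ y : EuclideanSpace ℝ (Fin d),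
      (∫ z : EuclideanSpace ℝ (Fin d),
        prof d α t (x - y) * prof d α t (w - z) * ‖y - z‖ ^ (-β))
      ≤ prof d α t (x - y) * ((K1c d β + (Vd d + K2c d α)) * t ^ (-β / α)) := by
    intro y
    have e : (∫ z : EuclideanSpace ℝ (Fin d),
        prof d α t (x - y) * prof d α t (w - z) * ‖y - z‖ ^ (-β))
        = prof d α t (x - y) * ∫ z : EuclideanSpace ℝ (Fin d),
            prof d α t (w - z) * ‖y - z‖ ^ (-β) := by
      simp_rw [mul_assoc]
      rw [integral_const_mul]
    rw [e]
    exact mul_le_mul_of_nonneg_left (inner_est hd hα0 hβ hβd ht y w) (prof_nonneg ht _)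
  calc (∫ y : EuclideanSpace ℝ (Fin d), ∫ z : EuclideanSpace ℝ (Fin d),
        prof d α t (x - y) * prof d α t (w - z) * ‖y - z‖ ^ (-β))
      ≤ ∫ y : EuclideanSpace ℝ (Fin d),
          prof d α t (x - y) * ((K1c d β + (Vd d + K2c d α)) * t ^ (-β / α)) :=
        integral_mono_of_nonneg
          (ae_of_all _ fun y => integral_nonneg fun z =>
            mul_nonneg (mul_nonneg (prof_nonneg ht _) (prof_nonneg ht _))
              (Real.rpow_nonneg (norm_nonneg _) _))
          hGint (ae_of_all _ step)
    _ = (∫ y : EuclideanSpace ℝ (Fin d), prof d α t (x - y))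
          * ((K1c d β + (Vd d + K2c d α)) * t ^ (-β / α)) := integral_mul_const _ _
    _ ≤ (Vd d + K2c d α) * ((K1c d β + (Vd d + K2c d α)) * t ^ (-β / α)) := by
        refine mul_le_mul_of_nonneg_right ?_ (mul_nonneg hC2pos.le hτ)
        rw [integral_sub_left_eq_self (fun u : EuclideanSpace ℝ (Fin d) => prof d α t u) volume x]
        exact hpv
    _ = (Vd d + K2c d α) * (K1c d β + (Vd d + K2c d α)) * t ^ (-β / α) := by ring
end

section
/- Let θ ∈ (0, 1]. There exist positive constants C and c (depending only on θ) such that for all x ≥ 0, ∑_{n=0}^{∞} xⁿ/(n!)^{θ} ≥ C exp( c x^{1/θ} ). -/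
open Finset Filter

lemma real_rpow_add_le {a b θ : ℝ} (ha : 0 ≤ a) (hb : 0 ≤ b) (h0 : 0 ≤ θ) (h1 : θ ≤ 1) :
    (a + b) ^ θ ≤ a ^ θ + b ^ θ := by
  lift a to NNReal using ha
  lift b to NNReal using hb
  have := NNReal.rpow_add_le_add_rpow a b h0 h1
  exact_mod_cast this

lemma sum_rpow_le_rpow_sum {θ : ℝ} (h0 : 0 < θ) (h1 : θ ≤ 1) (f : ℕ → ℝ)
    (hf : ∀ i, 0 ≤ f i) (N : ℕ) :
    (∑ i ∈ range N, f i) ^ θ ≤ ∑ i ∈ range N, f i ^ θ := by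
  induction N with
  | zero => simp [Real.zero_rpow h0.ne']
  | succ N ih =>
    rw [Finset.sum_range_succ, Finset.sum_range_succ]
    calc ((∑ i ∈ range N, f i) + f N) ^ θ
        ≤ (∑ i ∈ range N, f i) ^ θ + f N ^ θ :=
          real_rpow_add_le (Finset.sum_nonneg fun i _ => hf i) (hf N) h0.le h1
      _ ≤ (∑ i ∈ range N, f i ^ θ) + f N ^ θ := by gcongr

lemma ml_summable {θ : ℝ} (h0 : 0 < θ) {x : ℝ} (hx : 0 ≤ x) :
    Summable (fun n : ℕ => x ^ n / (n.factorial : ℝ) ^ θ) := by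
  apply summable_of_ratio_norm_eventually_le (r := 1/2) (by norm_num)
  have htend : Tendsto (fun n : ℕ => ((n : ℝ) + 1) ^ θ) atTop atTop :=
    (tendsto_rpow_atTop h0).comp (tendsto_natCast_atTop_atTop.atTop_add tendsto_const_nhds)
  filter_upwards [htend.eventually_ge_atTop (2 * x)] with n hn
  have hfac : (0 : ℝ) < (n.factorial : ℝ) := by exact_mod_cast n.factorial_pos
  have hfac1 : (0 : ℝ) < ((n + 1).factorial : ℝ) := by exact_mod_cast (n + 1).factorial_pos
  have hn1 : (0 : ℝ) < (n : ℝ) + 1 := by positivity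
  rw [Real.norm_eq_abs, Real.norm_eq_abs, abs_div, abs_div,
    abs_of_nonneg (pow_nonneg hx _), abs_of_nonneg (pow_nonneg hx _),
    abs_of_nonneg (Real.rpow_nonneg hfac.le _), abs_of_nonneg (Real.rpow_nonneg hfac1.le _)]
  have hfs : ((n + 1).factorial : ℝ) = ((n : ℝ) + 1) * (n.factorial : ℝ) := by
    rw [Nat.factorial_succ]; push_cast; ring
  rw [hfs, Real.mul_rpow hn1.le hfac.le, pow_succ]
  rw [div_le_iff₀ (by positivity)]
  have key : x ≤ 1 / 2 * ((n : ℝ) + 1) ^ θ := by linarith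
  calc x ^ n * x ≤ x ^ n * (1 / 2 * ((n : ℝ) + 1) ^ θ) := by
        apply mul_le_mul_of_nonneg_left key (pow_nonneg hx n)
    _ = 1 / 2 * (x ^ n / (n.factorial : ℝ) ^ θ) * (((n : ℝ) + 1) ^ θ * (n.factorial : ℝ) ^ θ) := by
        field_simp

/-- Lower bound for the Mittag-Leffler-type series: for `θ ∈ (0,1]` there are
`C, c > 0` with `∑ xⁿ/(n!)^θ ≥ C exp(c x^(1/θ))` for all `x ≥ 0`. -/
theorem mittag_leffler_lower (θ : ℝ) (hθ : θ ∈ Set.Ioc (0 : ℝ) 1) :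
    ∃ C c : ℝ, 0 < C ∧ 0 < c ∧
      ∀ x : ℝ, 0 ≤ x →
        C * Real.exp (c * x ^ (1 / θ)) ≤ ∑' n : ℕ, x ^ n / (n.factorial : ℝ) ^ θ := by
  obtain ⟨h0, h1⟩ := hθ
  refine ⟨1, θ, one_pos, h0, fun x hx => ?_⟩
  rw [one_mul]
  set y := x ^ (1 / θ) with hy
  have hy0 : 0 ≤ y := Real.rpow_nonneg hx _
  have hyx : y ^ θ = x := by
    rw [hy, one_div, Real.rpow_inv_rpow hx h0.ne']
  -- each term equals (y^n/n!)^θ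
  have hterm : ∀ n : ℕ, (y ^ n / (n.factorial : ℝ)) ^ θ = x ^ n / (n.factorial : ℝ) ^ θ := by
    intro n
    have hfac : (0 : ℝ) ≤ (n.factorial : ℝ) := by positivity
    rw [Real.div_rpow (pow_nonneg hy0 _) hfac]
    congr 1
    rw [← Real.rpow_natCast y n, ← Real.rpow_mul hy0, mul_comm, Real.rpow_mul hy0, hyx,
      Real.rpow_natCast]
  have hsum := ml_summable h0 hx
  -- partial sums of exp series
  have hexp : Real.exp y = ∑' n : ℕ, y ^ n / (n.factorial : ℝ) := by
    rw [Real.exp_eq_exp_ℝ, NormedSpace.exp_eq_tsum_div]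
  have htends : Tendsto (fun N => ∑ i ∈ range N, y ^ i / (i.factorial : ℝ)) atTop
      (nhds (Real.exp y)) := by
    rw [hexp]
    exact (Real.summable_pow_div_factorial y).hasSum.tendsto_sum_nat
  have htendr : Tendsto (fun N => (∑ i ∈ range N, y ^ i / (i.factorial : ℝ)) ^ θ) atTop
      (nhds ((Real.exp y) ^ θ)) :=
    htends.rpow_const (Or.inl (Real.exp_ne_zero y))
  have hle : (Real.exp y) ^ θ ≤ ∑' n : ℕ, x ^ n / (n.factorial : ℝ) ^ θ := by
    refine le_of_tendsto htendr (Eventually.of_forall fun N => ?_)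
    calc (∑ i ∈ range N, y ^ i / (i.factorial : ℝ)) ^ θ
        ≤ ∑ i ∈ range N, (y ^ i / (i.factorial : ℝ)) ^ θ :=
          sum_rpow_le_rpow_sum h0 h1 _ (fun i => by positivity) N
      _ = ∑ i ∈ range N, x ^ i / (i.factorial : ℝ) ^ θ := by
          exact Finset.sum_congr rfl fun i _ => hterm i
      _ ≤ ∑' n : ℕ, x ^ n / (n.factorial : ℝ) ^ θ :=
          Summable.sum_le_tsum _ (fun i _ => by positivity) hsum
  refine le_trans (le_of_eq ?_) hle
  rw [Real.rpow_def_of_pos (Real.exp_pos y), Real.log_exp, mul_comm]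
end
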